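/- arXiv:1501.02721 — 8 statements merged into one kernel-verified Lean document; each statement's English description precedes it below -/
import Mathlib

section
/- Let K be a field and M a nonzero K-subspace of n×n matrices over K. Let A ∈ M have maximal rank r among elements of M, and suppose |K| ≥ r + 1. Then for every u in the kernel of A and every B ∈ M, the vector B·u lies in the image (column space) of A. -/
open Module Polynomial

lemma aux_not_li {K V : Type*} [Field K] [AddCommGroup V] [Module K V]
    {m : ℕ} (y : Fin m → V) (S : Submodule K V) [FiniteDimensional K S]
    (hy : ∀ i, y i ∈ S) (hS : Module.finrank K S < m) :
    ¬ LinearIndependent K y := by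
  intro h
  have h' : LinearIndependent K (fun i => (⟨y i, hy i⟩ : S)) :=
    h.of_comp S.subtype
  have hc := h'.fintype_card_le_finrank
  simp only [Fintype.card_fin] at hc
  omega

set_option maxHeartbeats 1000000 in

/-- Let K be a field and M a nonzero K-subspace of n×n matrices over K.
Let A ∈ M have maximal rank r among elements of M, and suppose |K| ≥ r + 1.
Then for every u in the kernel of A and every B ∈ M, the vector Bu lies in the
image (column space) of A. -/
theorem stmt0 (K : Type*) [Field K] (n r : ℕ)
    (M : Submodule K (Matrix (Fin n) (Fin n) K)) (hM : M ≠ ⊥)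
    (A : Matrix (Fin n) (Fin n) K) (hA : A ∈ M) (hrA : A.rank = r)
    (hmax : ∀ B ∈ M, Matrix.rank B ≤ r)
    (hK : (r + 1 : Cardinal) ≤ Cardinal.mk K)
    (u : Fin n → K) (hu : A.mulVec u = 0)
    (B : Matrix (Fin n) (Fin n) K) (hB : B ∈ M) :
    B.mulVec u ∈ LinearMap.range A.mulVecLin := by
  classical
  by_contra hBu
  have hWr : Module.finrank K (LinearMap.range A.mulVecLin) = r := hrA
  let b : Basis (Fin r) K (LinearMap.range A.mulVecLin) :=
    Module.finBasisOfFinrankEq K _ hWr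
  have hvex : ∀ j : Fin r, ∃ x, A.mulVec x = (b j : Fin n → K) := fun j => (b j).2
  choose v hv using hvex
  have hfun : (fun j : Fin r => A.mulVec (v j))
      = (LinearMap.range A.mulVecLin).subtype ∘ b := by
    funext j; exact hv j
  have hspan : Submodule.span K (Set.range fun j : Fin r => A.mulVec (v j))
      = LinearMap.range A.mulVecLin := by
    rw [hfun, Set.range_comp, Submodule.span_image, b.span_eq, Submodule.map_top,
      Submodule.range_subtype]
  let w : Fin (r+1) → (Fin n → K) :=
    Fin.snoc (fun j => A.mulVec (v j)) (B.mulVec u)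
  have hwi : LinearIndependent K w := by
    refine linearIndependent_fin_snoc.mpr ⟨?_, by rw [hspan]; exact hBu⟩
    rw [hfun]
    exact b.linearIndependent.map' _ (Submodule.ker_subtype _)
  have hL : LinearMap.ker (Fintype.linearCombination K w) = ⊥ := by
    rw [LinearMap.ker_eq_bot']
    intro c hc
    have h0 := Fintype.linearIndependent_iff.mp hwi c
      (by simpa [Fintype.linearCombination_apply] using hc)
    funext i; exact h0 i
  obtain ⟨π, hπ⟩ := (Fintype.linearCombination K w).exists_leftInverse_of_injective hL
  have hπw : ∀ i, π (w i) = Pi.single i 1 := by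
    intro i
    have h1 : Fintype.linearCombination K w (Pi.single i 1) = w i := by
      rw [Fintype.linearCombination_apply_single, one_smul]
    rw [← h1]
    have h2 := LinearMap.congr_fun hπ (Pi.single i 1)
    simpa using h2
  set C : Matrix (Fin r) (Fin r) K :=
    Matrix.of (fun i j : Fin r => π (B.mulVec (v j)) i.castSucc) with hCdef
  have hBune : B.mulVec u ≠ 0 := fun h => hBu (h ▸ Submodule.zero_mem _)
  have key : ∀ s : K, (s • (1 : Matrix (Fin r) (Fin r) K) + C).det = 0 := by
    intro s
    set D := s • A + B with hD
    have hDM : D ∈ M := M.add_mem (M.smul_mem s hA) hB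
    have hrD : Module.finrank K (LinearMap.range D.mulVecLin) ≤ r := hmax D hDM
    set y : Fin (r+1) → (Fin n → K) :=
      Fin.snoc (fun j => D.mulVec (v j)) (B.mulVec u) with hydef
    have hy : ∀ i, y i ∈ LinearMap.range D.mulVecLin := by
      intro i
      refine Fin.lastCases ?_ ?_ i
      · have h3 : D.mulVec u = B.mulVec u := by
          simp [hD, Matrix.add_mulVec, Matrix.smul_mulVec, hu]
        have h4 : y (Fin.last r) = B.mulVec u := by simp [hydef]
        rw [h4]; exact ⟨u, h3⟩
      · intro j
        have h4 : y j.castSucc = D.mulVec (v j) := by simp [hydef]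
        rw [h4]; exact ⟨v j, rfl⟩
    have hyd : ¬ LinearIndependent K y :=
      aux_not_li y (LinearMap.range D.mulVecLin) hy (by omega)
    obtain ⟨g, hg0, i0, hgi⟩ := Fintype.not_linearIndependent_iff.mp hyd
    have hz : ∑ i, g i • π (y i) = 0 := by
      have : π (∑ i, g i • y i) = 0 := by rw [hg0]; simp
      simpa [map_sum, map_smul] using this
    have hylast : π (y (Fin.last r)) = Pi.single (Fin.last r) 1 := by
      have h4 : y (Fin.last r) = w (Fin.last r) := by
        simp [hydef, w, Fin.snoc_last]
      rw [h4, hπw]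
    have hycast : ∀ j : Fin r,
        π (y j.castSucc) = s • (Pi.single j.castSucc 1 : Fin (r+1) → K) + π (B.mulVec (v j)) := by
      intro j
      have h5 : y j.castSucc = s • A.mulVec (v j) + B.mulVec (v j) := by
        simp [hydef, Fin.snoc_castSucc, hD, Matrix.add_mulVec, Matrix.smul_mulVec]
      rw [h5, map_add, map_smul]
      congr 1
      rw [show A.mulVec (v j) = w j.castSucc by simp [w, Fin.snoc_castSucc], hπw]
    have hgcne : (fun j : Fin r => g j.castSucc) ≠ 0 := by
      intro hgc
      have hgz : ∀ j : Fin r, g j.castSucc = 0 := fun j => congrFun hgc j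
      have h6 : g (Fin.last r) • y (Fin.last r) = 0 := by
        rw [← hg0, Fin.sum_univ_castSucc]
        simp [hgz]
      have hlast : g (Fin.last r) = 0 := by
        by_contra hne
        exact hBune (by
          have := smul_eq_zero.mp h6
          simpa [hydef, Fin.snoc_last, hne] using this)
      refine hgi ?_
      refine Fin.lastCases ?_ ?_ i0
      · exact hlast
      · exact hgz
    have hmv : (s • (1 : Matrix (Fin r) (Fin r) K) + C).mulVec
        (fun j => g j.castSucc) = 0 := by
      funext i
      have h7 := congrFun hz i.castSucc
      rw [Fin.sum_univ_castSucc] at h7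
      simp only [Finset.sum_apply, Pi.add_apply, Pi.smul_apply, Pi.zero_apply,
        hylast, hycast, smul_eq_mul] at h7
      have h8 : (Pi.single (Fin.last r) (1:K) : Fin (r+1) → K) i.castSucc = 0 := by
        rw [Pi.single_apply, if_neg (Fin.castSucc_lt_last i).ne]
      rw [h8, mul_zero, add_zero] at h7
      rw [Matrix.mulVec, Pi.zero_apply]
      rw [← h7]
      apply Finset.sum_congr rfl
      intro j _
      simp only [dotProduct, Matrix.add_apply, Matrix.smul_apply,
        Matrix.one_apply, Pi.single_apply, hCdef, Matrix.of_apply, smul_eq_mul,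
        Fin.castSucc_inj]
      by_cases hij : i = j <;> simp [hij] <;> ring
    exact (Matrix.exists_mulVec_eq_zero_iff).mp ⟨fun j => g j.castSucc, hgcne, hmv⟩
  set p : Polynomial K := Matrix.charpoly (-C) with hpdef
  have hpm : p.Monic := Matrix.charpoly_monic _
  have hpd : p.natDegree = r := by
    rw [hpdef, Matrix.charpoly_natDegree_eq_dim, Fintype.card_fin]
  have hpeval : ∀ s : K, p.eval s = (s • (1 : Matrix (Fin r) (Fin r) K) + C).det := by
    intro s
    have h9 : p.eval s = ((Matrix.charmatrix (-C)).map (Polynomial.eval s)).det := by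
      rw [hpdef, Matrix.charpoly, ← Polynomial.coe_evalRingHom, RingHom.map_det]
      rfl
    rw [h9]
    congr 1
    ext i j
    by_cases hij : i = j <;>
      simp [Matrix.charmatrix_apply, Matrix.map_apply, Matrix.diagonal_apply, hij,
        Matrix.one_apply, Matrix.add_apply, Matrix.smul_apply]
  have hp0 : p ≠ 0 := hpm.ne_zero
  obtain ⟨t, ht⟩ := Cardinal.exists_finset_le_card K (r+1) (by exact_mod_cast hK)
  have hsub : t ⊆ p.roots.toFinset := by
    intro x hx
    rw [Multiset.mem_toFinset, Polynomial.mem_roots']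
    exact ⟨hp0, by rw [Polynomial.IsRoot, hpeval x, key x]⟩
  have hcard := Finset.card_le_card hsub
  have hfin := (Multiset.toFinset_card_le p.roots).trans (Polynomial.card_roots' p)
  omega
end

section
/- Let K be a field with |K| ≥ r + 1 and M a constant rank r subspace of M_n(K) with dim M = n + 1. Then for every nonzero u ∈ K^n, the subspace K_u = {A ∈ M : Au = 0} has dimension at least n + 1 − r. -/
/-- The linear map `A ↦ A.mulVec u` on matrices. -/
def mulVecRight (K : Type*) [Field K] (n : ℕ) (u : Fin n → K) :
    Matrix (Fin n) (Fin n) K →ₗ[K] (Fin n → K) where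
  toFun A := A.mulVec u
  map_add' A B := Matrix.add_mulVec A B u
  map_smul' c A := by simp [Matrix.smul_mulVec]

open Polynomial Module

/-- If a nonzero polynomial has small degree compared with the field cardinality,
it has a nonzero non-root. -/
lemma exists_eval_ne_zero {K : Type*} [Field K] (p : Polynomial K) (hp : p ≠ 0)
    (hcard : (p.natDegree : Cardinal) + 2 ≤ Cardinal.mk K) :
    ∃ t : K, t ≠ 0 ∧ p.eval t ≠ 0 := by
  classical
  by_contra h
  push_neg at h
  have hsub : (Set.univ : Set K) ⊆ ↑(insert (0 : K) p.roots.toFinset) := by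
    intro t _
    simp only [Finset.coe_insert, Set.mem_insert_iff, Multiset.mem_toFinset, Finset.mem_coe]
    rcases eq_or_ne t 0 with h0 | h0
    · exact Or.inl h0
    · exact Or.inr ((Polynomial.mem_roots hp).mpr (h t h0))
  have h1 : Cardinal.mk K ≤ ((insert (0 : K) p.roots.toFinset).card : Cardinal) := by
    calc Cardinal.mk K = Cardinal.mk (Set.univ : Set K) := Cardinal.mk_univ.symm
    _ ≤ Cardinal.mk (↑(insert (0 : K) p.roots.toFinset) : Set K) :=
        Cardinal.mk_le_mk_of_subset hsub
    _ = ((insert (0 : K) p.roots.toFinset).card : Cardinal) := by exact Cardinal.mk_coe_finset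
  have h2 : (insert (0 : K) p.roots.toFinset).card ≤ p.natDegree + 1 := by
    calc (insert (0 : K) p.roots.toFinset).card ≤ p.roots.toFinset.card + 1 :=
        Finset.card_insert_le _ _
    _ ≤ Multiset.card p.roots + 1 := by
        exact Nat.add_le_add_right (Multiset.toFinset_card_le _) 1
    _ ≤ p.natDegree + 1 := Nat.add_le_add_right (Polynomial.card_roots' p) 1
  have h3 : Cardinal.mk K ≤ ((p.natDegree + 1 : ℕ) : Cardinal) :=
    h1.trans (by exact_mod_cast Nat.cast_le.mpr h2)
  have h4 : ((p.natDegree : Cardinal) + 2) ≤ ((p.natDegree + 1 : ℕ) : Cardinal) :=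
    hcard.trans h3
  have : ((p.natDegree + 2 : ℕ) : Cardinal) ≤ ((p.natDegree + 1 : ℕ) : Cardinal) := by
    push_cast
    push_cast at h4
    exact h4
  have := Nat.cast_le.mp this
  omega

/-- A linearly independent family of vectors lying in a submodule `W` has at most
`finrank W` members. -/
lemma indep_card_le {K : Type*} [Field K] {n m : ℕ} {W : Submodule K (Fin n → K)}
    {c : Fin m → (Fin n → K)} (hmem : ∀ i, c i ∈ W) (hind : LinearIndependent K c) :
    m ≤ Module.finrank K W := by
  have h : LinearIndependent K (fun i => (⟨c i, hmem i⟩ : W)) := by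
    apply LinearIndependent.of_comp W.subtype
    convert hind
    rfl
  simpa using h.fintype_card_le_finrank

/-- A left inverse sending an independent family to the standard basis. -/
lemma exists_left_inv {K : Type*} [Field K] {n m : ℕ} {g : Fin m → (Fin n → K)}
    (hg : LinearIndependent K g) :
    ∃ φ : (Fin n → K) →ₗ[K] (Fin m → K), ∀ i, φ (g i) = Pi.single i 1 := by
  classical
  let j : (Fin m → K) →ₗ[K] (Fin n → K) :=
    { toFun := fun c => ∑ i, c i • g i
      map_add' := by
        intro a b
        simp [add_smul, Finset.sum_add_distrib]
      map_smul' := by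
        intro a b
        simp [smul_smul, Finset.smul_sum] }
  have hj : ∀ i, j (Pi.single i 1) = g i := by
    intro i
    simp only [j, LinearMap.coe_mk, AddHom.coe_mk]
    simp [Pi.single_apply, ite_smul]
  have hker : LinearMap.ker j = ⊥ := by
    rw [LinearMap.ker_eq_bot']
    intro c hc
    have hc' : ∑ i, c i • g i = 0 := hc
    funext i
    exact Fintype.linearIndependent_iff.mp hg c hc' i
  obtain ⟨φ, hφ⟩ := j.exists_leftInverse_of_injective hker
  refine ⟨φ, fun i => ?_⟩
  have := congrFun (congrArg (fun (f : (Fin m → K) →ₗ[K] (Fin m → K)) => f.toFun) hφ)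
    (Pi.single i 1)
  simpa [hj i] using this

/-- Modifying one member of an independent family by a combination with nonzero
coefficient there keeps it independent. -/
lemma indep_update {K : Type*} [Field K] {n r : ℕ} {w : Fin r → (Fin n → K)}
    (hw : LinearIndependent K w) (a : Fin r → K) (i0 : Fin r) (ha : a i0 ≠ 0) :
    LinearIndependent K (fun i => if i = i0 then ∑ j, a j • w j else w i) := by
  classical
  rw [Fintype.linearIndependent_iff]
  intro c hc
  set cc : Fin r → K := fun j => (if j = i0 then 0 else c j) + c i0 * a j with hccdef
  have key : ∑ j, cc j • w j = 0 := by
    have e1 : ∑ i, c i • (if i = i0 then ∑ j, a j • w j else w i)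
        = c i0 • (∑ j, a j • w j) + ∑ i ∈ Finset.univ.erase i0, c i • w i := by
      rw [← Finset.add_sum_erase Finset.univ _ (Finset.mem_univ i0), if_pos rfl]
      congr 1
      refine Finset.sum_congr rfl fun i hi => ?_
      rw [if_neg (Finset.ne_of_mem_erase hi)]
    have e2 : c i0 • (∑ j, a j • w j)
        = (c i0 * a i0) • w i0 + ∑ j ∈ Finset.univ.erase i0, (c i0 * a j) • w j := by
      rw [Finset.smul_sum]
      simp_rw [smul_smul]
      rw [← Finset.add_sum_erase Finset.univ _ (Finset.mem_univ i0)]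
    have e3 : ∑ j, cc j • w j
        = (c i0 * a i0) • w i0 + ∑ j ∈ Finset.univ.erase i0, (c j + c i0 * a j) • w j := by
      rw [← Finset.add_sum_erase Finset.univ _ (Finset.mem_univ i0)]
      congr 1
      · simp [hccdef]
      · refine Finset.sum_congr rfl fun j hj => ?_
        simp [hccdef, Finset.ne_of_mem_erase hj]
    rw [e3, ← hc, e1, e2]
    simp_rw [add_smul]
    rw [Finset.sum_add_distrib]
    abel
  have hall := Fintype.linearIndependent_iff.mp hw cc key
  have hci0 : c i0 = 0 := by
    have h1 := hall i0
    simp only [hccdef, if_true, eq_self_iff_true, zero_add] at h1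
    exact (mul_eq_zero.mp h1).resolve_right ha
  intro i
  rcases eq_or_ne i i0 with h | h
  · rw [h]; exact hci0
  · have h1 := hall i
    simp only [hccdef, if_neg h, hci0, zero_mul, add_zero] at h1
    exact h1

/-- Degree bound for the determinant of an affine pencil of matrices. -/
lemma natDegree_det_pencil_le {K : Type*} [Field K] {m : ℕ}
    (G H : Matrix (Fin m) (Fin m) K) (s : Finset (Fin m))
    (hs : ∀ j ∉ s, ∀ i, H i j = 0) :
    (Matrix.det (Matrix.of fun i j => Polynomial.C (G i j) + Polynomial.X * Polynomial.C (H i j))).natDegree ≤ s.card := by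
  classical
  rw [Matrix.det_apply']
  refine Polynomial.natDegree_sum_le_of_forall_le _ _ fun σ _ => ?_
  refine (Polynomial.natDegree_mul_le).trans ?_
  rw [Polynomial.natDegree_intCast, zero_add]
  refine (Polynomial.natDegree_prod_le _ _).trans ?_
  have hb : ∀ i, ((Matrix.of fun i j => Polynomial.C (G i j) + Polynomial.X * Polynomial.C (H i j))
      (σ i) i).natDegree ≤ if i ∈ s then 1 else 0 := by
    intro i
    by_cases hi : i ∈ s
    · rw [if_pos hi]
      refine (Polynomial.natDegree_add_le _ _).trans ?_
      refine max_le (by simp) ?_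
      refine (Polynomial.natDegree_mul_le).trans ?_
      simp [Polynomial.natDegree_X]
    · rw [if_neg hi]
      simp only [Matrix.of_apply, hs i hi, map_zero, mul_zero, add_zero]
      simp
  refine (Finset.sum_le_sum fun i (_ : i ∈ Finset.univ) => hb i).trans ?_
  rw [Finset.sum_ite_mem, Finset.univ_inter, Finset.sum_const, smul_eq_mul, mul_one]

/-- Columns of a matrix with nonzero determinant are independent. -/
lemma cols_indep {K : Type*} [Field K] {m : ℕ} (N : Matrix (Fin m) (Fin m) K)
    (h : N.det ≠ 0) : LinearIndependent K (fun j i => N i j) := by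
  rw [Fintype.linearIndependent_iff]
  intro c hc
  have hinj : Function.Injective N.mulVec :=
    Matrix.mulVec_injective_iff_isUnit.mpr ((Matrix.isUnit_iff_isUnit_det N).mpr
      (isUnit_iff_ne_zero.mpr h))
  have hmv : N.mulVec c = 0 := by
    funext i
    have := congrFun hc i
    simpa [Matrix.mulVec, dotProduct, Finset.sum_apply, mul_comm] using this
  have hc0 : c = 0 := hinj (by rw [hmv, Matrix.mulVec_zero])
  intro i
  rw [hc0]
  rfl

/-- Key lemma: if `A ∈ M` is nonzero with `A *ᵥ u = 0`, then for any `B ∈ M`,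
`B *ᵥ u` lies in the range of `A`. -/
lemma key_lemma {K : Type*} [Field K] {n r : ℕ} (hr1 : 1 ≤ r)
    (hK : (r + 1 : Cardinal) ≤ Cardinal.mk K)
    (M : Submodule K (Matrix (Fin n) (Fin n) K))
    (hconst : ∀ A ∈ M, A ≠ 0 → Matrix.rank A = r)
    (u : Fin n → K)
    (A : Matrix (Fin n) (Fin n) K) (hA : A ∈ M) (hA0 : A ≠ 0) (hAu : A.mulVec u = 0)
    (B : Matrix (Fin n) (Fin n) K) (hB : B ∈ M) :
    B.mulVec u ∈ LinearMap.range A.mulVecLin := by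
  classical
  by_contra hy
  set y := B.mulVec u with hydef
  -- B is nonzero
  have hB0 : B ≠ 0 := by
    rintro rfl
    exact hy (by simp [hydef])
  have hrA : Module.finrank K (LinearMap.range A.mulVecLin) = r := hconst A hA hA0
  have hrB : Module.finrank K (LinearMap.range B.mulVecLin) = r := hconst B hB hB0
  -- a basis of the range of A, with preimages v'
  let b : Basis (Fin r) K (LinearMap.range A.mulVecLin) :=
    Module.finBasisOfFinrankEq K _ hrA
  have hbmem : ∀ i, ((b i : Fin n → K)) ∈ LinearMap.range A.mulVecLin := fun i => (b i).2
  have hchoice : ∀ i, ∃ x, A.mulVec x = (b i : Fin n → K) := by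
    intro i
    obtain ⟨x, hx⟩ := hbmem i
    exact ⟨x, hx⟩
  choose v' hv' using hchoice
  set w : Fin r → (Fin n → K) := fun i => (b i : Fin n → K) with hwdef
  have hw : LinearIndependent K w :=
    b.linearIndependent.map' (LinearMap.range A.mulVecLin).subtype
      (Submodule.ker_subtype _)
  -- the vectors B *ᵥ v' i together with y are r+1 vectors in range B, hence dependent
  set d : Fin (r + 1) → (Fin n → K) := Fin.snoc (fun i => B.mulVec (v' i)) y with hddef
  have hdmem : ∀ i, d i ∈ LinearMap.range B.mulVecLin := by
    intro i
    refine Fin.lastCases ?_ ?_ i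
    · rw [hddef]; simp only [Fin.snoc_last]; exact ⟨u, rfl⟩
    · intro k; rw [hddef]; simp only [Fin.snoc_castSucc]; exact ⟨v' k, rfl⟩
  have hdnotind : ¬ LinearIndependent K d := by
    intro hind
    have := indep_card_le hdmem hind
    omega
  obtain ⟨a, hsum, i₁, hi₁⟩ := Fintype.not_linearIndependent_iff.mp hdnotind
  -- split the dependency relation
  set α : Fin r → K := fun i => a i.castSucc with hαdef
  set β : K := a (Fin.last r) with hβdef
  have hrel : (∑ i, α i • B.mulVec (v' i)) + β • y = 0 := by
    rw [← hsum, Fin.sum_univ_castSucc]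
    congr 1
    · refine Finset.sum_congr rfl fun i _ => ?_
      rw [hddef]; simp
      rfl
    · rw [hddef]; simp
      rfl
  -- find a nonzero coefficient among the α's
  have hex : ∃ i0 : Fin r, α i0 ≠ 0 := by
    by_contra hall
    push_neg at hall
    have hβ0 : β ≠ 0 := by
      intro hβ
      rcases Fin.eq_castSucc_or_eq_last i₁ with ⟨k, rfl⟩ | rfl
      · exact hi₁ (hall k)
      · exact hi₁ hβ
    have hsum0 : (∑ i, α i • B.mulVec (v' i)) = 0 :=
      Finset.sum_eq_zero fun i _ => by rw [hall i, zero_smul]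
    rw [hsum0, zero_add] at hrel
    have hy0 : y = 0 := (smul_eq_zero.mp hrel).resolve_left hβ0
    exact hy (hy0 ▸ Submodule.zero_mem _)
  obtain ⟨i0, hα0⟩ := hex
  -- modify the preimage family at i0
  set v : Fin r → (Fin n → K) :=
    fun i => if i = i0 then (∑ j, α j • v' j) + β • u else v' i with hvdef
  have hAv : ∀ i, A.mulVec (v i) = if i = i0 then ∑ j, α j • w j else w i := by
    intro i
    by_cases h : i = i0
    · simp only [hvdef, if_pos h]
      rw [← Matrix.mulVecLin_apply, map_add, map_smul, map_sum]
      simp only [map_smul, Matrix.mulVecLin_apply, hAu, hv']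
      simp [hwdef]
    · simp only [hvdef, if_neg h]
      exact hv' i
  have hBv0 : B.mulVec (v i0) = 0 := by
    have h1 : B.mulVec (v i0) = (∑ i, α i • B.mulVec (v' i)) + β • y := by
      simp only [hvdef, if_pos rfl]
      rw [← Matrix.mulVecLin_apply, map_add, map_smul, map_sum]
      simp only [map_smul, Matrix.mulVecLin_apply, hydef]
    rw [h1, hrel]
  -- the family g0 = (A *ᵥ v ..., y) is linearly independent
  have hAvind : LinearIndependent K (fun i => A.mulVec (v i)) := by
    have := indep_update hw α i0 hα0
    convert this using 1
    funext i
    exact hAv i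
  set g0 : Fin (r + 1) → (Fin n → K) := Fin.snoc (fun i => A.mulVec (v i)) y with hg0def
  have hg0 : LinearIndependent K g0 := by
    rw [hg0def, linearIndependent_fin_snoc]
    refine ⟨hAvind, fun hmem => ?_⟩
    have hle : Submodule.span K (Set.range fun i => A.mulVec (v i)) ≤
        LinearMap.range A.mulVecLin := by
      rw [Submodule.span_le]
      rintro - ⟨i, rfl⟩
      exact ⟨v i, rfl⟩
    exact hy (hle hmem)
  obtain ⟨φ, hφ⟩ := exists_left_inv hg0
  set h : Fin (r + 1) → (Fin n → K) := Fin.snoc (fun i => B.mulVec (v i)) 0 with hhdef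
  set G : Matrix (Fin (r + 1)) (Fin (r + 1)) K := Matrix.of fun i j => φ (g0 j) i with hGdef
  set H : Matrix (Fin (r + 1)) (Fin (r + 1)) K := Matrix.of fun i j => φ (h j) i with hHdef
  -- the determinant polynomial
  set p : Polynomial K :=
    Matrix.det (Matrix.of fun i j => Polynomial.C (G i j) + Polynomial.X * Polynomial.C (H i j))
    with hpdef
  -- degree bound
  set s : Finset (Fin (r + 1)) :=
    (Finset.univ.erase (Fin.castSucc i0)).erase (Fin.last r) with hsdef
  have hH0 : ∀ j ∉ s, ∀ i, H i j = 0 := by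
    intro j hj i
    have hj' : j = Fin.last r ∨ j = Fin.castSucc i0 := by
      by_contra hcon
      push_neg at hcon
      exact hj (by simp [hsdef, Finset.mem_erase, hcon.1, hcon.2])
    rcases hj' with rfl | rfl
    · rw [hHdef]
      simp [hhdef]
    · rw [hHdef]
      simp [hhdef, hBv0]
  have hlast_ne : Fin.last r ≠ Fin.castSucc i0 := (Fin.castSucc_lt_last i0).ne'
  have hscard : s.card = r - 1 := by
    rw [hsdef, Finset.card_erase_of_mem, Finset.card_erase_of_mem (Finset.mem_univ _)]
    · simp
    · exact Finset.mem_erase.mpr ⟨hlast_ne, Finset.mem_univ _⟩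
  have hdeg : p.natDegree ≤ r - 1 := by
    rw [hpdef, ← hscard]
    exact natDegree_det_pencil_le G H s hH0
  -- evaluation at 0 is 1
  have hmap0 : (Matrix.of fun i j =>
      Polynomial.C (G i j) + Polynomial.X * Polynomial.C (H i j)).map
        (Polynomial.evalRingHom 0) = (1 : Matrix (Fin (r + 1)) (Fin (r + 1)) K) := by
    ext i j
    simp only [Matrix.map_apply, Matrix.of_apply, coe_evalRingHom, Polynomial.eval_add,
      Polynomial.eval_mul, Polynomial.eval_C, Polynomial.eval_X, zero_mul, add_zero]
    rw [hGdef]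
    simp only [Matrix.of_apply, hφ]
    rw [Pi.single_apply, Matrix.one_apply]
  have heval0 : p.eval 0 = 1 := by
    have h1 : p.eval 0 = (Polynomial.evalRingHom 0) p := rfl
    rw [h1, hpdef, RingHom.map_det, RingHom.mapMatrix_apply, hmap0, Matrix.det_one]
  have hp0 : p ≠ 0 := fun h => by simp [h] at heval0
  have hcard2 : (p.natDegree : Cardinal) + 2 ≤ Cardinal.mk K := by
    have hnat : p.natDegree + 2 ≤ r + 1 := by omega
    calc (p.natDegree : Cardinal) + 2 = ((p.natDegree + 2 : ℕ) : Cardinal) := by push_cast; ring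
      _ ≤ ((r + 1 : ℕ) : Cardinal) := Nat.cast_le.mpr hnat
      _ ≤ Cardinal.mk K := by push_cast; exact hK
  obtain ⟨t, ht0, hpt⟩ := exists_eval_ne_zero p hp0 hcard2
  -- the matrix at t has nonzero determinant, so its columns are independent
  set Nt : Matrix (Fin (r + 1)) (Fin (r + 1)) K := Matrix.of fun i j => G i j + t * H i j
    with hNtdef
  have hmapt : (Matrix.of fun i j =>
      Polynomial.C (G i j) + Polynomial.X * Polynomial.C (H i j)).map
        (Polynomial.evalRingHom t) = Nt := by
    ext i j
    simp only [Matrix.map_apply, Matrix.of_apply, Polynomial.coe_evalRingHom,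
      Polynomial.eval_add, Polynomial.eval_mul, Polynomial.eval_C, Polynomial.eval_X, hNtdef]
  have hNt : Nt.det = p.eval t := by
    have h1 : p.eval t = (Polynomial.evalRingHom t) p := rfl
    rw [h1, hpdef, RingHom.map_det, RingHom.mapMatrix_apply, hmapt]
  have hcols : LinearIndependent K (fun j i => Nt i j) := cols_indep Nt (hNt ▸ hpt)
  have hφgt : (fun j i => Nt i j) = fun j => φ (g0 j + t • h j) := by
    funext j
    funext i
    rw [map_add, map_smul]
    simp [hNtdef, hGdef, hHdef]
  have hcols' : LinearIndependent K (⇑φ ∘ fun j => g0 j + t • h j) := by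
    rw [Function.comp_def, ← hφgt]
    exact hcols
  have hgt : LinearIndependent K (fun j => g0 j + t • h j) :=
    LinearIndependent.of_comp φ hcols' 
  -- scale the last vector by t
  set ω : Fin (r + 1) → Kˣ := fun j => if j = Fin.last r then Units.mk0 t ht0 else 1 with hωdef
  set vext : Fin (r + 1) → (Fin n → K) := Fin.snoc v u with hvextdef
  have hct : ∀ j, (A + t • B).mulVec (vext j) = ω j • (g0 j + t • h j) := by
    intro j
    refine Fin.lastCases ?_ ?_ j
    · have hω : ω (Fin.last r) = Units.mk0 t ht0 := by rw [hωdef]; simp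
      have hv1 : vext (Fin.last r) = u := by rw [hvextdef]; simp
      have hg : g0 (Fin.last r) = y := by rw [hg0def]; simp
      have hh : h (Fin.last r) = 0 := by rw [hhdef]; simp
      rw [hω, hv1, hg, hh, Matrix.add_mulVec, Matrix.smul_mulVec, hAu, hydef,
        Units.smul_def, Units.val_mk0]
      simp
    · intro k
      have hne : Fin.castSucc k ≠ Fin.last r := (Fin.castSucc_lt_last k).ne
      have hω : ω (Fin.castSucc k) = 1 := by rw [hωdef]; simp [hne]
      have hv1 : vext (Fin.castSucc k) = v k := by rw [hvextdef]; simp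
      have hg : g0 (Fin.castSucc k) = A.mulVec (v k) := by rw [hg0def]; simp
      have hh : h (Fin.castSucc k) = B.mulVec (v k) := by rw [hhdef]; simp
      rw [hω, hv1, hg, hh, one_smul, Matrix.add_mulVec, Matrix.smul_mulVec]
  have hctind : LinearIndependent K (fun j => (A + t • B).mulVec (vext j)) := by
    have h1 := hgt.units_smul ω
    convert h1 using 1
    funext j
    rw [hct j]
    rfl
  have hC0 : A + t • B ≠ 0 := by
    intro h0
    have h1 := hctind.ne_zero (Fin.last r)
    apply h1
    rw [h0, Matrix.zero_mulVec]
  have hmemC : ∀ j, (A + t • B).mulVec (vext j) ∈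
      LinearMap.range (A + t • B).mulVecLin :=
    fun j => ⟨vext j, Matrix.mulVecLin_apply _ _⟩
  have hfinal := indep_card_le hmemC hctind
  have hrC : Module.finrank K (LinearMap.range (A + t • B).mulVecLin) = r :=
    hconst (A + t • B) (M.add_mem hA (M.smul_mem t hB)) hC0
  omega

/-- Let K be a field with |K| ≥ r + 1 and M a constant rank r subspace of
M_n(K) with dim M = n + 1. Then for every nonzero u ∈ K^n, the subspace
K_u = {A ∈ M : Au = 0} has dimension at least n + 1 − r. -/
theorem stmt1 (K : Type*) [Field K] (n r : ℕ) (hr1 : 1 ≤ r) (hrn : r ≤ n)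
    (hK : (r + 1 : Cardinal) ≤ Cardinal.mk K)
    (M : Submodule K (Matrix (Fin n) (Fin n) K)) (hM : M ≠ ⊥)
    (hconst : ∀ A ∈ M, A ≠ 0 → Matrix.rank A = r)
    (hdim : Module.finrank K M = n + 1)
    (u : Fin n → K) (hu : u ≠ 0) :
    n + 1 - r ≤ Module.finrank K ↥(M ⊓ LinearMap.ker (mulVecRight K n u)) := by
  classical
  set g := mulVecRight K n u with hgdef
  set f : M →ₗ[K] (Fin n → K) := g.comp M.subtype with hfdef
  have hfin : Module.finrank K ↥(M ⊓ LinearMap.ker g)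
      = Module.finrank K (LinearMap.ker f) := by
    have h1 : LinearMap.ker f = Submodule.comap M.subtype (M ⊓ LinearMap.ker g) := by
      rw [hfdef, LinearMap.ker_comp, Submodule.comap_inf, Submodule.comap_subtype_self,
        top_inf_eq]
    rw [h1]
    exact (Submodule.comapSubtypeEquivOfLe inf_le_left).finrank_eq.symm
  have hrn2 : Module.finrank K (LinearMap.range f) + Module.finrank K (LinearMap.ker f)
      = n + 1 := by
    rw [← hdim]
    exact LinearMap.finrank_range_add_finrank_ker f
  have hrangele : Module.finrank K (LinearMap.range f) ≤ n := by
    have h2 : Module.finrank K (LinearMap.range f)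
        ≤ Module.finrank K (Fin n → K) := (LinearMap.range f).finrank_le
    simpa using h2
  -- find a nonzero element of M killing u
  have hker : LinearMap.ker f ≠ ⊥ := by
    intro hbot
    rw [hbot, finrank_bot, add_zero] at hrn2
    omega
  obtain ⟨x, hxker, hx0⟩ := (Submodule.ne_bot_iff _).mp hker
  have hAu : (x : Matrix (Fin n) (Fin n) K).mulVec u = 0 := hxker
  have hA0 : (x : Matrix (Fin n) (Fin n) K) ≠ 0 := fun hc => hx0 (Subtype.ext hc)
  have hkey : ∀ B ∈ M, B.mulVec u ∈ LinearMap.range (x : Matrix (Fin n) (Fin n) K).mulVecLin :=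
    key_lemma hr1 hK M hconst u x x.2 hA0 hAu
  have hle : LinearMap.range f ≤ LinearMap.range (x : Matrix (Fin n) (Fin n) K).mulVecLin := by
    rintro - ⟨⟨B, hBmem⟩, rfl⟩
    exact hkey B hBmem
  have hrangeler : Module.finrank K (LinearMap.range f) ≤ r := by
    have h3 := Submodule.finrank_mono hle
    have h4 : Module.finrank K
        (LinearMap.range (x : Matrix (Fin n) (Fin n) K).mulVecLin) = r :=
      hconst _ x.2 hA0
    omega
  rw [hfin]
  omega
end

section
/- Let q be a prime power and M a constant rank r subspace of M_n(F_q), where 1 ≤ r ≤ n, and suppose q ≥ r + 1. Then dim M ≤ n. -/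
set_option maxHeartbeats 1000000

open Module Submodule Polynomial
/-- Given a linearly independent family, there is a linear functional family picking out coordinates. -/
lemma exists_dual_family {F : Type*} [Field F] {n m : ℕ}
    {x : Fin m → (Fin n → F)} (hx : LinearIndependent F x) :
    ∃ φ : (Fin n → F) →ₗ[F] (Fin m → F), ∀ j, φ (x j) = Pi.single j 1 := by
  classical
  set S := Submodule.span F (Set.range x) with hS
  obtain ⟨p, hp⟩ := S.exists_isCompl
  let π := Submodule.projectionOnto S p hp
  let β : Basis (Fin m) F S := Basis.span hx
  refine ⟨(β.equivFun.toLinearMap).comp π, ?_⟩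
  intro j
  have hmem : x j ∈ S := Submodule.subset_span ⟨j, rfl⟩
  have h1 : π (x j) = ⟨x j, hmem⟩ := by
    have := Submodule.projectionOnto_apply_left hp (⟨x j, hmem⟩ : S)
    simpa using this
  have h2 : (⟨x j, hmem⟩ : S) = β j := (Basis.span_apply hx j).symm
  simp only [LinearMap.comp_apply, h1, h2, LinearEquiv.coe_coe]
  ext k
  rw [Basis.equivFun_apply, Basis.repr_self]
  rcases eq_or_ne k j with h | h
  · simp [h, Finsupp.single_apply, Pi.single_apply]
  · simp [Finsupp.single_apply, Pi.single_apply, h, Ne.symm h]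

/-- If all columns of a square matrix lie in a submodule of too-small rank, det = 0. -/
lemma det_eq_zero_of_cols_in {F : Type*} [Field F] {m : ℕ} (N : Matrix (Fin m) (Fin m) F)
    (T : Submodule F (Fin m → F)) (hT : Module.finrank F T < m)
    (hcol : ∀ j, (fun i => N i j) ∈ T) : N.det = 0 := by
  classical
  rw [← Matrix.exists_mulVec_eq_zero_iff]
  by_cases hli : LinearIndependent F (fun j i => N i j)
  · exfalso
    have h1 : Module.finrank F (span F (Set.range fun j i => N i j)) = m := by
      rw [finrank_span_eq_card hli, Fintype.card_fin]
    have h2 : span F (Set.range fun j i => N i j) ≤ T := by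
      rw [Submodule.span_le]; rintro _ ⟨j, rfl⟩; exact hcol j
    have := Submodule.finrank_mono h2
    omega
  · obtain ⟨g, hg, i0, hi0⟩ := Fintype.not_linearIndependent_iff.mp hli
    refine ⟨g, ?_, ?_⟩
    · intro h; apply hi0; rw [h]; rfl
    · ext i
      have := congrFun hg i
      simpa [Matrix.mulVec, dotProduct, mul_comm] using this

lemma lemL {q n r : ℕ} {F : Type*} [Field F] [Fintype F] (hF : Fintype.card F = q)
    (hqr : r + 1 ≤ q) (hr1 : 1 ≤ r)
    {M : Submodule F (Matrix (Fin n) (Fin n) F)}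
    (hconst : ∀ A ∈ M, A ≠ 0 → Matrix.rank A = r)
    {A B : Matrix (Fin n) (Fin n) F} (hA : A ∈ M) (hB : B ∈ M) (hA0 : A ≠ 0)
    {v : Fin n → F} (hv : A.mulVec v = 0) :
    B.mulVec v ∈ LinearMap.range A.mulVecLin := by
  classical
  by_contra hBv
  have hB0 : B ≠ 0 := by
    rintro rfl
    exact hBv (by simp only [Matrix.zero_mulVec]; exact Submodule.zero_mem _)
  set U := LinearMap.range A.mulVecLin with hUdef
  have hrA : Matrix.rank A = r := hconst A hA hA0
  have hU : Module.finrank F U = r := hrA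
  let β : Basis (Fin r) F U := Module.finBasisOfFinrankEq F U hU
  have hmem : ∀ j, (β j : Fin n → F) ∈ U := fun j => (β j).2
  choose u hu using fun j => LinearMap.mem_range.mp (hmem j)
  set x : Fin (r+1) → (Fin n → F) :=
    Fin.snoc (fun j => (β j : Fin n → F)) (B.mulVec v) with hxdef
  have hxli : LinearIndependent F x := by
    rw [hxdef, linearIndependent_fin_snoc]
    constructor
    · exact β.linearIndependent.map' U.subtype U.ker_subtype
    · have e : (Set.range fun j => (β j : Fin n → F)) = U.subtype '' Set.range β := by
        rw [← Set.range_comp]; rfl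
      rw [e, Submodule.span_image, β.span_eq, Submodule.map_top, Submodule.range_subtype]
      exact hBv
  set y : Fin (r+1) → (Fin n → F) := Fin.snoc (fun j => B.mulVec (u j)) 0 with hydef
  obtain ⟨φ, hφ⟩ := exists_dual_family hxli
  set N : Matrix (Fin (r+1)) (Fin (r+1)) (Polynomial F) :=
    Matrix.of fun i j => C (φ (x j) i) + X * C (φ (y j) i) with hNdef
  set P := N.det with hPdef
  -- eval at 0 is 1
  have heval0 : P.eval 0 = 1 := by
    have h0 : N.map (eval 0) = 1 := by
      ext i j
      simp only [hNdef, Matrix.map_apply, Matrix.of_apply, eval_add, eval_mul, eval_C,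
        eval_X, zero_mul, add_zero, hφ j, Matrix.one_apply, Pi.single_apply]
    have h2 : eval 0 N.det = (N.map (eval 0)).det := by
      have := RingHom.map_det (evalRingHom (0:F)) N
      simpa [coe_evalRingHom, RingHom.mapMatrix_apply] using this
    rw [hPdef, h2, h0, Matrix.det_one]
  -- eval at nonzero t is 0
  have hev : ∀ t : F, t ≠ 0 → P.eval t = 0 := by
    intro t ht
    have hABM : A + t • B ∈ M := M.add_mem hA (M.smul_mem t hB)
    have hrk : Module.finrank F (LinearMap.range (A + t • B).mulVecLin) ≤ r := by
      by_cases h : A + t • B = 0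
      · rw [h]
        rw [Matrix.mulVecLin_zero, LinearMap.range_zero]
        exact le_trans (le_of_eq (finrank_bot F _)) (Nat.zero_le r)
      · exact le_of_eq (hconst _ hABM h)
    set T := Submodule.map φ (LinearMap.range (A + t • B).mulVecLin) with hTdef
    have hTr : Module.finrank F T < r + 1 :=
      lt_of_le_of_lt (le_trans (Submodule.finrank_map_le φ _) hrk) (Nat.lt_succ_self r)
    have hcol : ∀ j, (fun i => (N.map (eval t)) i j) ∈ T := by
      intro j
      have hc : (fun i => (N.map (eval t)) i j) = φ (x j + t • y j) := by
        ext i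
        simp only [hNdef, Matrix.map_apply, Matrix.of_apply, eval_add, eval_mul, eval_C,
          eval_X, map_add, map_smul, Pi.add_apply, Pi.smul_apply, smul_eq_mul]
      rw [hc]
      have hmem2 : x j + t • y j ∈ LinearMap.range (A + t • B).mulVecLin := by
        refine Fin.lastCases ?_ ?_ j
        · simp only [hxdef, hydef, Fin.snoc_last, smul_zero, add_zero]
          have hs : (A + t • B).mulVecLin v = t • B.mulVec v := by
            simp [Matrix.mulVecLin_apply, Matrix.add_mulVec, hv, Matrix.smul_mulVec]
          refine ⟨t⁻¹ • v, ?_⟩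
          rw [map_smul, hs, smul_smul, inv_mul_cancel₀ ht, one_smul]
        · intro j'
          simp only [hxdef, hydef, Fin.snoc_castSucc]
          refine ⟨u j', ?_⟩
          have hs : (A + t • B).mulVecLin (u j') = A.mulVec (u j') + t • B.mulVec (u j') := by
            simp [Matrix.mulVecLin_apply, Matrix.add_mulVec, Matrix.smul_mulVec]
          rw [hs]
          have := hu j'
          rw [Matrix.mulVecLin_apply] at this
          rw [this]
      exact Submodule.mem_map_of_mem hmem2
    have hdet0 := det_eq_zero_of_cols_in (N.map (eval t)) T hTr hcol
    have h2 : eval t N.det = (N.map (eval t)).det := by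
      have := RingHom.map_det (evalRingHom t) N
      simpa [coe_evalRingHom, RingHom.mapMatrix_apply] using this
    rw [hPdef, h2, hdet0]
  -- coefficient and degree analysis
  have hylast : φ (y (Fin.last r)) = 0 := by
    rw [hydef]; simp only [Fin.snoc_last, map_zero]
  set D : Matrix (Fin (r+1)) (Fin (r+1)) F :=
    Matrix.of fun i j => if j = Fin.last r then φ (x (Fin.last r)) i else φ (y j) i with hDdef
  have hlastmem : Fin.last r ∈ (Finset.univ : Finset (Fin (r+1))) := Finset.mem_univ _
  have hcards : (Finset.univ.erase (Fin.last r)).card = r := by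
    rw [Finset.card_erase_of_mem hlastmem, Finset.card_univ, Fintype.card_fin]
    simp
  have hterm : ∀ σ : Equiv.Perm (Fin (r+1)),
      (∏ i, N (σ i) i).natDegree ≤ r ∧ (∏ i, N (σ i) i).coeff r = ∏ i, D (σ i) i := by
    intro σ
    have hfac : ∀ i : Fin (r+1), (N (σ i) i).natDegree ≤ 1 := by
      intro i
      refine le_trans (natDegree_add_le _ _) (max_le (by simp) ?_)
      refine le_trans (natDegree_mul_le) ?_
      simp [natDegree_X]
    have hsplit : (∏ i, N (σ i) i) =
        (∏ i ∈ Finset.univ.erase (Fin.last r), N (σ i) i) * N (σ (Fin.last r)) (Fin.last r) :=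
      (Finset.prod_erase_mul _ _ hlastmem).symm
    have hNlast : N (σ (Fin.last r)) (Fin.last r)
        = C (φ (x (Fin.last r)) (σ (Fin.last r))) := by
      simp [hNdef, hylast]
    constructor
    · rw [hsplit, hNlast]
      refine le_trans (natDegree_mul_le) ?_
      rw [natDegree_C, add_zero]
      refine le_trans (natDegree_prod_le _ _) ?_
      calc (∑ i ∈ Finset.univ.erase (Fin.last r), (N (σ i) i).natDegree)
          ≤ ∑ _i ∈ Finset.univ.erase (Fin.last r), 1 :=
            Finset.sum_le_sum (fun i _ => hfac i)
        _ = r := by rw [Finset.sum_const, hcards, smul_eq_mul, mul_one]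
    · rw [hsplit, hNlast, coeff_mul_C]
      have hprod : (∏ i ∈ Finset.univ.erase (Fin.last r), N (σ i) i).coeff r
          = ∏ i ∈ Finset.univ.erase (Fin.last r), (N (σ i) i).coeff 1 := by
        have := coeff_prod_of_natDegree_le (s := Finset.univ.erase (Fin.last r))
          (fun i => N (σ i) i) 1 (fun i _ => hfac i)
        rwa [hcards, mul_one] at this
      rw [hprod, ← Finset.prod_erase_mul _ _ hlastmem]
      congr 1
      · apply Finset.prod_congr rfl
        intro i hi
        have hne : i ≠ Fin.last r := (Finset.mem_erase.mp hi).1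
        have hc1 : (N (σ i) i).coeff 1 = φ (y i) (σ i) := by
          simp only [hNdef, Matrix.of_apply, coeff_add, coeff_C, X_mul, coeff_mul_X,
            coeff_C_zero]
          norm_num
        rw [hc1, hDdef]
        simp [hne]
      · rw [hDdef]; simp
  have hPdeg : P.natDegree ≤ r := by
    rw [hPdef, Matrix.det_apply']
    refine natDegree_sum_le_of_forall_le _ _ ?_
    intro σ _
    refine le_trans (natDegree_mul_le) ?_
    simpa [natDegree_intCast] using (hterm σ).1
  have hPcoeff : P.coeff r = D.det := by
    rw [hPdef, Matrix.det_apply', finset_sum_coeff, Matrix.det_apply']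
    apply Finset.sum_congr rfl
    intro σ _
    rw [← C_eq_intCast, coeff_C_mul, (hterm σ).2]
  have hDdet : D.det = 0 := by
    apply det_eq_zero_of_cols_in D (Submodule.map φ (LinearMap.range B.mulVecLin))
    · have hr : Module.finrank F (LinearMap.range B.mulVecLin) = r := hconst B hB hB0
      exact lt_of_le_of_lt (le_trans (Submodule.finrank_map_le φ _) (le_of_eq hr))
        (Nat.lt_succ_self r)
    · intro j
      by_cases hj : j = Fin.last r
      · subst hj
        have hcolj : (fun i => D i (Fin.last r)) = φ (B.mulVec v) := by
          ext i; simp [hDdef, hxdef, Fin.snoc_last]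
        rw [hcolj]
        exact Submodule.mem_map_of_mem ⟨v, Matrix.mulVecLin_apply _ _⟩
      · obtain ⟨j', rfl⟩ := Fin.exists_castSucc_eq.mpr hj
        have hcolj : (fun i => D i j'.castSucc) = φ (B.mulVec (u j')) := by
          ext i
          simp [hDdef, hydef, Fin.snoc_castSucc, hj]
        rw [hcolj]
        exact Submodule.mem_map_of_mem ⟨u j', Matrix.mulVecLin_apply _ _⟩
  have hPne : P ≠ 0 := by
    intro h
    rw [h] at heval0
    simp at heval0
  have hdeglt : P.natDegree < r := by
    rcases lt_or_eq_of_le hPdeg with h | h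
    · exact h
    · exfalso
      apply hPne
      have hl : P.leadingCoeff = 0 := by rw [leadingCoeff, h, hPcoeff, hDdet]
      exact leadingCoeff_eq_zero.mp hl
  have hsub : (Finset.univ.erase (0:F)) ⊆ P.roots.toFinset := by
    intro t ht
    rw [Multiset.mem_toFinset, mem_roots']
    exact ⟨hPne, hev t (Finset.mem_erase.mp ht).1⟩
  have hcard : q - 1 ≤ P.natDegree := by
    have h1 : (Finset.univ.erase (0:F)).card = q - 1 := by
      rw [Finset.card_erase_of_mem (Finset.mem_univ _), Finset.card_univ, hF]
    calc q - 1 = (Finset.univ.erase (0:F)).card := h1.symm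
      _ ≤ P.roots.toFinset.card := Finset.card_le_card hsub
      _ ≤ Multiset.card P.roots := Multiset.toFinset_card_le _
      _ ≤ P.natDegree := P.card_roots'
  omega

/-- Let q be a prime power and M a constant rank r subspace of M_n(F_q),
where 1 ≤ r ≤ n, and suppose q ≥ r + 1. Then dim M ≤ n. -/
theorem stmt2 (q n r : ℕ) (hq : IsPrimePow q)
    (F : Type*) [Field F] [Fintype F] (hF : Fintype.card F = q)
    (hr1 : 1 ≤ r) (hrn : r ≤ n) (hqr : r + 1 ≤ q)
    (M : Submodule F (Matrix (Fin n) (Fin n) F)) (hM : M ≠ ⊥)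
    (hconst : ∀ A ∈ M, A ≠ 0 → Matrix.rank A = r) :
    Module.finrank F M ≤ n := by
  classical
  by_contra hd'
  push_neg at hd'
  set d := Module.finrank F ↥M with hddef
  have hd : n + 1 ≤ d := hd'
  have hq2 : 2 ≤ q := by omega
  letI : Fintype ↥M := Fintype.ofFinite ↥M
  have hcardM : Fintype.card ↥M = q ^ d := by
    rw [← hF]; exact card_eq_pow_finrank (K := F) (V := ↥M)
  have hcardV : Fintype.card (Fin n → F) = q ^ n := by
    simp [Fintype.card_fun, hF]
  -- key pointwise estimate
  have key : ∀ v : Fin n → F, v ≠ 0 →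
      ∃ k : ℕ, d - r ≤ k ∧
        Fintype.card {B : ↥M // (B : Matrix (Fin n) (Fin n) F).mulVec v = 0} = q ^ k := by
    intro v hv
    let ev : ↥M →ₗ[F] (Fin n → F) :=
      { toFun := fun B => (B : Matrix (Fin n) (Fin n) F).mulVec v
        map_add' := by intro a b; simp [Matrix.add_mulVec]
        map_smul' := by intro c a; simp [Matrix.smul_mulVec] }
    have hrn1 : Module.finrank F (LinearMap.range ev) + Module.finrank F (LinearMap.ker ev) = d :=
      LinearMap.finrank_range_add_finrank_ker ev
    have hrange : Module.finrank F (LinearMap.range ev) ≤ n :=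
      le_trans (Submodule.finrank_le _) (by simp)
    have hkerne : LinearMap.ker ev ≠ ⊥ := by
      intro h
      rw [h, finrank_bot] at hrn1
      omega
    obtain ⟨A', hA'mem, hA'ne⟩ := (Submodule.ne_bot_iff _).mp hkerne
    have hcoene : (A' : Matrix (Fin n) (Fin n) F) ≠ 0 := by
      simpa [Submodule.coe_eq_zero] using hA'ne
    have hA'v : (A' : Matrix (Fin n) (Fin n) F).mulVec v = 0 := hA'mem
    have hrange2 : LinearMap.range ev ≤ LinearMap.range (A' : Matrix (Fin n) (Fin n) F).mulVecLin := by
      rintro w ⟨B, rfl⟩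
      exact lemL hF hqr hr1 hconst A'.2 B.2 hcoene hA'v
    have hr2 : Module.finrank F (LinearMap.range ev) ≤ r :=
      le_trans (Submodule.finrank_mono hrange2) (le_of_eq (hconst _ A'.2 hcoene))
    refine ⟨Module.finrank F (LinearMap.ker ev), by omega, ?_⟩
    have e1 : Fintype.card {B : ↥M // (B : Matrix (Fin n) (Fin n) F).mulVec v = 0}
        = Fintype.card (LinearMap.ker ev) := by
      apply Fintype.card_congr
      exact Equiv.subtypeEquivRight (by intro B; rw [LinearMap.mem_ker]; rfl)
    rw [e1, ← hF]
    exact Module.card_eq_pow_finrank (K := F) (V := LinearMap.ker ev)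
  -- double counting
  set cond : ↥M → (Fin n → F) → Prop :=
    fun B v => B ≠ 0 ∧ v ≠ 0 ∧ (B : Matrix (Fin n) (Fin n) F).mulVec v = 0 with hconddef
  have hswap : ∑ B : ↥M, (Finset.univ.filter fun v => cond B v).card
      = ∑ v : Fin n → F, (Finset.univ.filter fun B => cond B v).card := by
    simp only [Finset.card_filter]
    rw [Finset.sum_comm]
  have hBside : ∀ B : ↥M, B ≠ 0 →
      (Finset.univ.filter fun v => cond B v).card = q ^ (n - r) - 1 := by
    intro B hB
    have hBne : (B : Matrix (Fin n) (Fin n) F) ≠ 0 := by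
      simpa [Submodule.coe_eq_zero] using hB
    have hrB : Matrix.rank (B : Matrix (Fin n) (Fin n) F) = r := hconst _ B.2 hBne
    have hkd : Module.finrank F (LinearMap.ker (B : Matrix (Fin n) (Fin n) F).mulVecLin) = n - r := by
      have h1 := LinearMap.finrank_range_add_finrank_ker (B : Matrix (Fin n) (Fin n) F).mulVecLin
      rw [show Module.finrank F (Fin n → F) = n by simp] at h1
      have h2 : Module.finrank F (LinearMap.range (B : Matrix (Fin n) (Fin n) F).mulVecLin) = r := hrB
      omega
    have hcard : (Finset.univ.filter fun v : Fin n → F =>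
        (B : Matrix (Fin n) (Fin n) F).mulVec v = 0).card = q ^ (n - r) := by
      rw [← Fintype.card_subtype]
      have e1 : Fintype.card {v : Fin n → F // (B : Matrix (Fin n) (Fin n) F).mulVec v = 0}
          = Fintype.card (LinearMap.ker (B : Matrix (Fin n) (Fin n) F).mulVecLin) := by
        apply Fintype.card_congr
        refine Equiv.subtypeEquivRight (by intro w; rw [LinearMap.mem_ker, Matrix.mulVecLin_apply])
      rw [e1, ← hF, card_eq_pow_finrank (K := F), hkd]
    have hee : (Finset.univ.filter fun v => cond B v)
        = (Finset.univ.filter fun v : Fin n → F =>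
            (B : Matrix (Fin n) (Fin n) F).mulVec v = 0).erase 0 := by
      ext v
      simp only [Finset.mem_erase, Finset.mem_filter, Finset.mem_univ, true_and, hconddef]
      constructor
      · rintro ⟨_, hv, h0⟩; exact ⟨hv, h0⟩
      · rintro ⟨hv, h0⟩; exact ⟨hB, hv, h0⟩
    rw [hee, Finset.card_erase_of_mem (by simp [Matrix.mulVec_zero]), hcard]
  have hLHS : ∑ B : ↥M, (Finset.univ.filter fun v => cond B v).card
      = (q ^ d - 1) * (q ^ (n - r) - 1) := by
    rw [← Finset.sum_erase_add _ _ (Finset.mem_univ (0 : ↥M))]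
    have h0 : (Finset.univ.filter fun v => cond (0 : ↥M) v).card = 0 := by
      simp [hconddef]
    rw [h0, add_zero,
      Finset.sum_congr rfl (fun B hB => hBside B (Finset.mem_erase.mp hB).1),
      Finset.sum_const, Finset.card_erase_of_mem (Finset.mem_univ _), Finset.card_univ,
      hcardM, smul_eq_mul]
  have hvside : ∀ v : Fin n → F, v ≠ 0 →
      q ^ (d - r) - 1 ≤ (Finset.univ.filter fun B => cond B v).card := by
    intro v hv
    obtain ⟨k, hk, hcardk⟩ := key v hv
    have he : (Finset.univ.filter fun B => cond B v)
        = (Finset.univ.filter fun B : ↥M =>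
            (B : Matrix (Fin n) (Fin n) F).mulVec v = 0).erase 0 := by
      ext B
      simp only [Finset.mem_erase, Finset.mem_filter, Finset.mem_univ, true_and, hconddef]
      constructor
      · rintro ⟨hB, _, h0⟩; exact ⟨hB, h0⟩
      · rintro ⟨hB, h0⟩; exact ⟨hB, hv, h0⟩
    have hfc : (Finset.univ.filter fun B : ↥M =>
        (B : Matrix (Fin n) (Fin n) F).mulVec v = 0).card = q ^ k := by
      rw [← Fintype.card_subtype, hcardk]
    rw [he, Finset.card_erase_of_mem (by simp [Matrix.zero_mulVec]), hfc]
    have : q ^ (d - r) ≤ q ^ k := Nat.pow_le_pow_right (by omega) hk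
    omega
  have hRHS : (q ^ n - 1) * (q ^ (d - r) - 1)
      ≤ ∑ v : Fin n → F, (Finset.univ.filter fun B => cond B v).card := by
    calc (q ^ n - 1) * (q ^ (d - r) - 1)
        = ∑ _v ∈ Finset.univ.erase (0 : Fin n → F), (q ^ (d - r) - 1) := by
          rw [Finset.sum_const, Finset.card_erase_of_mem (Finset.mem_univ _), Finset.card_univ,
            hcardV, smul_eq_mul]
      _ ≤ ∑ v ∈ Finset.univ.erase (0 : Fin n → F), (Finset.univ.filter fun B => cond B v).card :=
          Finset.sum_le_sum (fun v hv => hvside v (Finset.mem_erase.mp hv).1)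
      _ ≤ ∑ v : Fin n → F, (Finset.univ.filter fun B => cond B v).card :=
          Finset.sum_le_sum_of_subset (Finset.erase_subset _ _)
  have hineq : (q ^ n - 1) * (q ^ (d - r) - 1) ≤ (q ^ d - 1) * (q ^ (n - r) - 1) := by
    rw [← hLHS, hswap]; exact hRHS
  -- final arithmetic contradiction
  have hrd : r ≤ d := by omega
  have hqd : q ^ d = q ^ (d - r) * q ^ r := by
    rw [← pow_add, Nat.sub_add_cancel hrd]
  have hqn : q ^ n = q ^ (n - r) * q ^ r := by
    rw [← pow_add, Nat.sub_add_cancel hrn]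
  have hab : q ^ (n - r) < q ^ (d - r) := Nat.pow_lt_pow_right (by omega) (by omega)
  have hc2 : 2 ≤ q ^ r := le_trans hq2 (Nat.le_self_pow (by omega) q)
  have hb1 : 1 ≤ q ^ (n - r) := Nat.one_le_pow _ _ (by omega)
  rw [hqd, hqn] at hineq
  set a := q ^ (d - r)
  set b := q ^ (n - r)
  set c := q ^ r
  have hineqZ : ((b : ℤ) * c - 1) * ((a : ℤ) - 1) ≤ ((a : ℤ) * c - 1) * ((b : ℤ) - 1) := by
    have h1 : 1 ≤ b * c := le_trans hb1 (Nat.le_mul_of_pos_right _ (by omega))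
    have h2 : 1 ≤ a * c := by nlinarith
    have h3 : 1 ≤ a := by omega
    have := hineq
    zify [h1, h2, h3, hb1] at this
    linarith
  have habZ : (b : ℤ) + 1 ≤ (a : ℤ) := by exact_mod_cast hab
  have hcZ : (2 : ℤ) ≤ (c : ℤ) := by exact_mod_cast hc2
  have hbZ : (1 : ℤ) ≤ (b : ℤ) := by exact_mod_cast hb1
  nlinarith [mul_pos (sub_pos.mpr (lt_of_lt_of_le (by linarith : (b:ℤ) < b + 1) habZ))
    (sub_pos.mpr (lt_of_lt_of_le one_lt_two hcZ))]
end

section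
/- Let K be a field, m ≤ n, and M a constant rank m subspace of M_{m×n}(K) (every nonzero element has full rank m). Then dim M ≤ n, with no restriction on the size of K. -/
/-- Let K be a field, m ≤ n, and M a constant rank m subspace of
M_{m×n}(K) (every nonzero element has full rank m). Then dim M ≤ n,
with no restriction on the size of K. -/
theorem stmt4 (K : Type*) [Field K] (m n : ℕ) (hmn : m ≤ n)
    (M : Submodule K (Matrix (Fin m) (Fin n) K)) (hM : M ≠ ⊥)
    (hconst : ∀ A ∈ M, A ≠ 0 → Matrix.rank A = m) :
    Module.finrank K M ≤ n := by
  -- m = 0 is impossible since then the matrix space is trivial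
  rcases Nat.eq_zero_or_pos m with rfl | hm
  · exact absurd (Subsingleton.elim M ⊥) hM
  -- the row vector u = e₀
  set u : Fin m → K := Pi.single ⟨0, hm⟩ 1 with hu
  have hu0 : u ≠ 0 := by
    intro h
    have := congr_fun h ⟨0, hm⟩
    simp [hu] at this
  -- the linear map M → K^n, A ↦ u ᵥ* A, is injective
  let f : M →ₗ[K] (Fin n → K) :=
    { toFun := fun A => Matrix.vecMul u (A : Matrix (Fin m) (Fin n) K)
      map_add' := by
        intro A B
        ext j
        simp [Matrix.vecMul, dotProduct, Finset.sum_add_distrib, mul_add]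
      map_smul' := by
        intro c A
        ext j
        simp [Matrix.vecMul, dotProduct, Finset.mul_sum, mul_left_comm] }
  have hf : Function.Injective f := by
    rw [injective_iff_map_eq_zero]
    intro A hA
    by_contra hA0
    have hAne : (A : Matrix (Fin m) (Fin n) K) ≠ 0 := by
      intro h
      exact hA0 (Subtype.ext h)
    have hrank := hconst A A.2 hAne
    have hli : LinearIndependent K (fun i => (A : Matrix (Fin m) (Fin n) K) i) := by
      rw [linearIndependent_iff_card_eq_finrank_span]
      rw [Matrix.rank_eq_finrank_span_row] at hrank
      have h := hrank.symm
      simp [Set.finrank, Matrix.row] at h ⊢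
      exact h
    have hinj : Function.Injective (A : Matrix (Fin m) (Fin n) K).vecMul :=
      Matrix.vecMul_injective_iff.mpr hli
    have : Matrix.vecMul u (A : Matrix (Fin m) (Fin n) K) =
        Matrix.vecMul 0 (A : Matrix (Fin m) (Fin n) K) := by
      simpa [f, Matrix.zero_vecMul] using hA
    exact hu0 (hinj this)
  calc Module.finrank K M ≤ Module.finrank K (Fin n → K) :=
        LinearMap.finrank_le_finrank_of_injective hf
    _ = n := by simp
end

section
/- Let q ≥ 2 be an integer, n > r ≥ 1. There is no function r : S → ℤ defined on a set S of size q^n − 1 with r(u) ≥ n + 1 − r for all u ∈ S, such that q^{2n+1−r} − q^{n−r} − q^{n+1} + q^n = Σ_{u ∈ S} q^{r(u)}. -/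
/-- Let q ≥ 2 be an integer, n > r ≥ 1. There is no function
f : S → ℕ on a set S of size q^n − 1 with f(u) ≥ n + 1 − r for all u ∈ S, such that
q^{2n+1−r} − q^{n−r} − q^{n+1} + q^n = Σ_{u ∈ S} q^{f(u)}. -/
theorem stmt10 (q n r : ℕ) (hq : 2 ≤ q) (hr1 : 1 ≤ r) (hrn : r < n)
    (S : Type*) [Fintype S] (hS : Fintype.card S = q ^ n - 1)
    (f : S → ℕ) (hf : ∀ u : S, n + 1 - r ≤ f u) :
    (q : ℤ) ^ (2 * n + 1 - r) - (q : ℤ) ^ (n - r) - (q : ℤ) ^ (n + 1) + (q : ℤ) ^ n ≠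
      ∑ u : S, (q : ℤ) ^ (f u) := by
  intro h
  have hrn' : r ≤ n := hrn.le
  have hq0 : (1:ℤ) < (q:ℤ) := by exact_mod_cast hq
  -- key exponent: n - r + 1 = n + 1 - r
  have hdvd_rhs : (q:ℤ) ^ (n - r + 1) ∣ ∑ u : S, (q : ℤ) ^ (f u) := by
    apply Finset.dvd_sum
    intro u _
    apply pow_dvd_pow
    have := hf u
    omega
  have h1 : (q:ℤ) ^ (n - r + 1) ∣ (q:ℤ) ^ (2 * n + 1 - r) := pow_dvd_pow _ (by omega)
  have h2 : (q:ℤ) ^ (n - r + 1) ∣ (q:ℤ) ^ (n + 1) := pow_dvd_pow _ (by omega)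
  have h3 : (q:ℤ) ^ (n - r + 1) ∣ (q:ℤ) ^ n := pow_dvd_pow _ (by omega)
  have hkey : (q:ℤ) ^ (n - r + 1) ∣ (q:ℤ) ^ (n - r) := by
    have : (q:ℤ) ^ (n - r) =
        (q:ℤ) ^ (2 * n + 1 - r) - (q:ℤ) ^ (n + 1) + (q:ℤ) ^ n
          - ∑ u : S, (q : ℤ) ^ (f u) := by linarith [h]
    rw [this]
    exact dvd_sub (dvd_add (dvd_sub h1 h2) h3) hdvd_rhs
  rw [pow_succ] at hkey
  obtain ⟨c, hc⟩ := hkey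
  have hqne : (q:ℤ) ^ (n - r) ≠ 0 := by positivity
  have : (1:ℤ) = q * c := by
    apply mul_left_cancel₀ hqne
    rw [mul_one]
    linarith [hc, mul_assoc ((q:ℤ) ^ (n - r)) (q:ℤ) c]
  have : (q:ℤ) ∣ 1 := ⟨c, this⟩
  have := Int.le_of_dvd one_pos this
  omega
end

section
/- Let q be a prime power, m ≤ n, and 1 ≤ r ≤ m. Then M_{m×n}(F_q) contains a constant rank r subspace of dimension n (so the bound dim M ≤ n from the main theorem is optimal over finite fields). -/
open Polynomial

lemma aux_fixed {F E : Type*} [Field F] [Fintype F] [Field E] [Algebra F E]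
    (p c n k : ℕ) [ExpChar E p] (hcn : c ^ n = p ^ k) (hc : c = Fintype.card F)
    (roots : Set E) (hroots : ∀ x ∈ roots, x ^ c ^ n = x)
    (hadj : Algebra.adjoin F roots = ⊤) : ∀ x : E, x ^ c ^ n = x := by
  let S : Subalgebra F E :=
    { carrier := {x : E | x ^ c ^ n = x}
      mul_mem' := fun {x y} hx hy => by
        simp only [Set.mem_setOf_eq] at hx hy ⊢
        rw [mul_pow, hx, hy]
      add_mem' := fun {x y} hx hy => by
        simp only [Set.mem_setOf_eq] at hx hy ⊢
        rw [hcn] at hx hy ⊢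
        rw [add_pow_expChar_pow, hx, hy]
      algebraMap_mem' := fun r => by
        show (algebraMap F E r) ^ c ^ n = algebraMap F E r
        rw [← map_pow]
        congr 1
        rw [hc]
        exact FiniteField.pow_card_pow n r }
  intro x
  have hle : Algebra.adjoin F roots ≤ S := Algebra.adjoin_le hroots
  rw [hadj, top_le_iff] at hle
  exact (show x ∈ S from hle ▸ Algebra.mem_top)

lemma aux_finrank (F : Type*) [Field F] [Fintype F] (n : ℕ) (hn : n ≠ 0) :
    Module.finrank F
      ((X ^ (Fintype.card F) ^ n - X : F[X]).SplittingField) = n := by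
  classical
  set c := Fintype.card F with hc
  set g : F[X] := X ^ c ^ n - X with hg
  set E := g.SplittingField
  have hc1 : 1 < c := Fintype.one_lt_card
  set p := ringChar F with hp
  have pprime : p.Prime := CharP.char_is_prime F p
  obtain ⟨k, hck⟩ := FiniteField.card F p
  replace hck := hck.2
  rw [← hc] at hck
  haveI : CharP E p := charP_of_injective_algebraMap (algebraMap F E).injective p
  haveI : ExpChar E p := ExpChar.prime pprime
  have hpdvd : p ∣ c := by rw [hck]; exact dvd_pow_self p k.pos.ne'
  have hpc : p ∣ c ^ n := dvd_pow hpdvd hn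
  have gsep : g.Separable := galois_poly_separable p (c ^ n) hpc
  have gne : g ≠ 0 := FiniteField.X_pow_card_pow_sub_X_ne_zero F hn hc1
  have key : Fintype.card (g.rootSet E) = g.natDegree :=
    card_rootSet_eq_natDegree gsep (SplittingField.splits g)
  have ndeg : g.natDegree = c ^ n :=
    FiniteField.X_pow_card_pow_sub_X_natDegree_eq F hn hc1
  rw [ndeg] at key
  have hcn : c ^ n = p ^ (k * n) := by rw [hck, pow_mul]
  have hrootmem : ∀ x : E, x ∈ g.rootSet E ↔ x ^ c ^ n = x := by
    intro x
    rw [mem_rootSet_of_ne gne]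
    simp [hg, sub_eq_zero]
  have hall : ∀ x : E, x ^ c ^ n = x :=
    aux_fixed p c n (k * n) hcn hc (g.rootSet E)
      (fun x hx => (hrootmem x).mp hx) (SplittingField.adjoin_rootSet g)
  have huniv : g.rootSet E = Set.univ := by
    ext x
    simp only [Set.mem_univ, iff_true]
    exact (hrootmem x).mpr (hall x)
  haveI : Finite E := Module.finite_of_finite F
  haveI : Fintype E := Fintype.ofFinite E
  have hcard : Fintype.card (g.rootSet E) = Fintype.card E :=
    Fintype.card_congr ((Equiv.setCongr huniv).trans (Equiv.Set.univ E))
  rw [hcard] at key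
  have h2 := Module.card_eq_pow_finrank (K := F) (V := E)
  rw [key, ← hc] at h2
  exact (Nat.pow_right_injective hc1 h2).symm

/-- Let q be a prime power, m ≤ n, and 1 ≤ r ≤ m. Then M_{m×n}(F_q)
contains a constant rank r subspace of dimension n. -/
theorem stmt12 (q m n r : ℕ) (hq : IsPrimePow q)
    (F : Type*) [Field F] [Fintype F] (hF : Fintype.card F = q)
    (hmn : m ≤ n) (hr1 : 1 ≤ r) (hrm : r ≤ m) :
    ∃ M : Submodule F (Matrix (Fin m) (Fin n) F),
      Module.finrank F M = n ∧ ∀ A ∈ M, A ≠ 0 → Matrix.rank A = r := by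
  classical
  have hrn : r ≤ n := hrm.trans hmn
  have h0r : 0 < r := hr1
  have h0m : 0 < m := h0r.trans_le hrm
  have h0n : 0 < n := h0r.trans_le hrn
  set c := Fintype.card F with hc
  set g : F[X] := X ^ c ^ n - X with hg
  set E := g.SplittingField with hEdef
  have hE : Module.finrank F E = n := aux_finrank F n h0n.ne'
  let bE : Module.Basis (Fin n) F E := Module.finBasisOfFinrankEq F E hE
  -- the projection maps
  let a : (Fin n → F) →ₗ[F] (Fin r → F) := LinearMap.funLeft F F (Fin.castLE hrn)
  have asurj : Function.Surjective a :=
    LinearMap.funLeft_surjective_of_injective F F _ (Fin.castLE_injective hrn)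
  let b : (Fin r → F) →ₗ[F] (Fin m → F) :=
    LinearMap.pi (fun i : Fin m =>
      if h : (i : ℕ) < r then LinearMap.proj (⟨i, h⟩ : Fin r) else 0)
  have hb : ∀ (u : Fin r → F) (i : Fin m),
      b u i = if h : (i : ℕ) < r then u ⟨i, h⟩ else 0 := by
    intro u i
    simp only [b, LinearMap.pi_apply]
    split <;> simp_all [LinearMap.proj]
  have binj : Function.Injective b := by
    intro u v huv
    funext j
    have h1 := congrFun huv (Fin.castLE hrm j)
    rw [hb, hb] at h1
    have hj : ((Fin.castLE hrm j : Fin m) : ℕ) < r := j.2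
    rw [dif_pos hj, dif_pos hj] at h1
    simpa using h1
  let p2 : (Fin n → F) →ₗ[F] (Fin m → F) := b ∘ₗ a
  let π : E →ₗ[F] (Fin m → F) := p2 ∘ₗ bE.equivFun.toLinearMap
  let es : (Fin n → F) →ₗ[F] E := bE.equivFun.symm.toLinearMap
  -- the family of linear maps
  let Ψ : E →ₗ[F] ((Fin n → F) →ₗ[F] (Fin m → F)) :=
    { toFun := fun x => π ∘ₗ ((LinearMap.mul F E x) ∘ₗ es)
      map_add' := by
        intro x y
        rw [map_add, LinearMap.add_comp, LinearMap.comp_add]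
      map_smul' := by
        intro s x
        rw [map_smul, LinearMap.smul_comp, LinearMap.comp_smul]
        rfl }
  have hΨ : ∀ (x : E) (v : Fin n → F), Ψ x v = π (x * bE.equivFun.symm v) := by
    intro x v
    rfl
  let Φ : E →ₗ[F] Matrix (Fin m) (Fin n) F :=
    (LinearMap.toMatrix' : ((Fin n → F) →ₗ[F] (Fin m → F)) ≃ₗ[F] _).toLinearMap ∘ₗ Ψ
  have hΦ : ∀ x : E, Φ x = LinearMap.toMatrix' (Ψ x) := fun x => rfl
  -- injectivity
  have Φinj : Function.Injective Φ := by
    rw [← LinearMap.ker_eq_bot, LinearMap.ker_eq_bot']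
    intro x hx
    by_contra hx0
    have hΨ0 : Ψ x = 0 := by
      have := hΦ x
      rw [hx] at this
      exact (LinearEquiv.map_eq_zero_iff _).mp this.symm
    let z : E := bE.equivFun.symm (Pi.single (⟨0, h0n⟩ : Fin n) 1)
    have h1 : Ψ x (bE.equivFun (x⁻¹ * z)) = π z := by
      rw [hΨ, LinearEquiv.symm_apply_apply, ← mul_assoc, mul_inv_cancel₀ hx0, one_mul]
    rw [hΨ0] at h1
    have h2 : π z (⟨0, h0m⟩ : Fin m) = 1 := by
      show p2 (bE.equivFun z) _ = 1
      have hz : bE.equivFun z = Pi.single (⟨0, h0n⟩ : Fin n) 1 :=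
        bE.equivFun.apply_symm_apply _
      rw [hz]
      show b (a (Pi.single (⟨0, h0n⟩ : Fin n) 1)) _ = 1
      rw [hb, dif_pos h0r]
      exact Pi.single_eq_same (M := fun _ : Fin n => F) (⟨0, h0n⟩ : Fin n) (1 : F)
    rw [← h1] at h2
    simp at h2
  refine ⟨LinearMap.range Φ, ?_, ?_⟩
  · rw [LinearMap.finrank_range_of_inj Φinj, hE]
  · rintro A ⟨x, rfl⟩ hA0
    have hx0 : x ≠ 0 := by
      rintro rfl
      exact hA0 (map_zero Φ)
    have h6 : Matrix.toLin (Pi.basisFun F (Fin n)) (Pi.basisFun F (Fin m)) (Φ x) = Ψ x := by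
      rw [Matrix.toLin_eq_toLin', hΦ, Matrix.toLin'_toMatrix']
    have hrank : Matrix.rank (Φ x) = Module.finrank F (LinearMap.range (Ψ x)) := by
      rw [Matrix.rank_eq_finrank_range_toLin (Φ x) (Pi.basisFun F (Fin m))
        (Pi.basisFun F (Fin n)), h6]
    rw [hrank]
    -- range of Ψ x is range of π
    have hsurj : LinearMap.range ((LinearMap.mul F E x) ∘ₗ es) = ⊤ := by
      rw [LinearMap.range_eq_top]
      intro y
      refine ⟨bE.equivFun (x⁻¹ * y), ?_⟩
      show x * bE.equivFun.symm (bE.equivFun (x⁻¹ * y)) = y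
      rw [LinearEquiv.symm_apply_apply, ← mul_assoc, mul_inv_cancel₀ hx0, one_mul]
    have h3 : LinearMap.range (Ψ x) = LinearMap.range π := by
      show LinearMap.range (π ∘ₗ ((LinearMap.mul F E x) ∘ₗ es)) = LinearMap.range π
      exact LinearMap.range_comp_of_range_eq_top π hsurj
    have h4 : LinearMap.range π = LinearMap.range b := by
      have h5 : LinearMap.range π = LinearMap.range p2 := by
        show LinearMap.range (p2 ∘ₗ bE.equivFun.toLinearMap) = LinearMap.range p2
        exact LinearMap.range_comp_of_range_eq_top p2 (LinearMap.range_eq_top.mpr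
          bE.equivFun.surjective)
      rw [h5]
      show LinearMap.range (b ∘ₗ a) = LinearMap.range b
      exact LinearMap.range_comp_of_range_eq_top b (LinearMap.range_eq_top.mpr asurj)
    rw [h3, h4, LinearMap.finrank_range_of_inj binj, Module.finrank_fin_fun]
end

section
/- Let q be any prime power and M a constant rank r subspace of M_{m×n}(F_q) with m ≤ n and 1 ≤ r ≤ m. Then dim M ≤ m + n − r. -/
open Finset

/-- Let q be any prime power and M a constant rank r subspace of
M_{m×n}(F_q) with m ≤ n and 1 ≤ r ≤ m. Then dim M ≤ m + n − r. -/
theorem stmt13 (q m n r : ℕ) (hq : IsPrimePow q)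
    (F : Type*) [Field F] [Fintype F] (hF : Fintype.card F = q)
    (hmn : m ≤ n) (hr1 : 1 ≤ r) (hrm : r ≤ m)
    (M : Submodule F (Matrix (Fin m) (Fin n) F)) (hM : M ≠ ⊥)
    (hconst : ∀ A ∈ M, A ≠ 0 → Matrix.rank A = r) :
    Module.finrank F M ≤ m + n - r := by
  classical
  subst hF
  by_contra hlt
  push_neg at hlt
  set Q := Fintype.card F with hQdef
  have hQ2 : 1 < Q := Fintype.one_lt_card
  set D := Module.finrank F M with hDdef
  have hrn : r ≤ n := hrm.trans hmn
  have hD : m + (n - r) + 1 ≤ D := by omega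
  haveI : Fintype M := Fintype.ofFinite _
  have hcardM : Fintype.card M = Q ^ D := Module.card_eq_pow_finrank
  -- the incidence count
  set f : M → ℕ := fun B =>
    (univ.filter fun x : Fin n → F => (B : Matrix (Fin m) (Fin n) F).mulVec x = 0).card with hf
  set S : ℕ := ∑ B : M, f B with hSdef
  -- row computation : each nonzero B contributes Q^(n-r), zero contributes Q^n
  have hzero : f 0 = Q ^ n := by
    have : (fun x : Fin n → F => ((0 : M) : Matrix (Fin m) (Fin n) F).mulVec x = 0)
        = fun _ => True := by
      funext x
      simp [Matrix.zero_mulVec]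
    simp only [hf, this, Finset.filter_true]
    rw [Finset.card_univ, Fintype.card_fun, Fintype.card_fin]
  have hnonzero : ∀ B : M, B ≠ 0 → f B = Q ^ (n - r) := by
    intro B hB
    have hBne : (B : Matrix (Fin m) (Fin n) F) ≠ 0 := by
      simpa using hB
    have hrank : Matrix.rank (B : Matrix (Fin m) (Fin n) F) = r := hconst _ B.2 hBne
    have hrange : Module.finrank F
        (LinearMap.range (Matrix.mulVecLin (B : Matrix (Fin m) (Fin n) F))) = r := hrank
    have hsum := LinearMap.finrank_range_add_finrank_ker
      (Matrix.mulVecLin (B : Matrix (Fin m) (Fin n) F))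
    rw [Module.finrank_fin_fun, hrange] at hsum
    have hker : Module.finrank F
        (LinearMap.ker (Matrix.mulVecLin (B : Matrix (Fin m) (Fin n) F))) = n - r := by
      omega
    have hpred : (fun x : Fin n → F => (B : Matrix (Fin m) (Fin n) F).mulVec x = 0)
        = fun x => x ∈ LinearMap.ker (Matrix.mulVecLin (B : Matrix (Fin m) (Fin n) F)) := by
      funext x
      simp [LinearMap.mem_ker]
    rw [hf]
    simp only [hpred]
    rw [← Fintype.card_subtype]
    rw [show Q ^ (n - r) = Q ^ (Module.finrank F
      (LinearMap.ker (Matrix.mulVecLin (B : Matrix (Fin m) (Fin n) F)))) from by rw [hker]]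
    exact Module.card_eq_pow_finrank
  have hrow : S = Q ^ n + (Q ^ D - 1) * Q ^ (n - r) := by
    rw [hSdef, ← Finset.add_sum_erase (univ : Finset M) f (Finset.mem_univ 0), hzero]
    congr 1
    rw [Finset.sum_congr rfl (fun B hB => hnonzero B (Finset.mem_erase.1 hB).1),
      Finset.sum_const, smul_eq_mul, Finset.card_erase_of_mem (Finset.mem_univ 0),
      Finset.card_univ, hcardM]
  -- column computation
  have hswap : S = ∑ x : Fin n → F,
      (univ.filter fun B : M => (B : Matrix (Fin m) (Fin n) F).mulVec x = 0).card := by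
    simp only [hSdef, hf, Finset.card_filter]
    rw [Finset.sum_comm]
  have hcol : Q ^ (n - r + 1) ∣ S := by
    rw [hswap]
    refine Finset.dvd_sum ?_
    intro x _
    -- evaluation linear map
    set ℓ : M →ₗ[F] (Fin m → F) :=
      { toFun := fun B => (B : Matrix (Fin m) (Fin n) F).mulVec x
        map_add' := fun B C => by
          simp [Matrix.add_mulVec]
        map_smul' := fun c B => by
          simp [Matrix.smul_mulVec] } with hl
    have hsum := LinearMap.finrank_range_add_finrank_ker ℓ
    have hrangele : Module.finrank F (LinearMap.range ℓ) ≤ m := by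
      have := Submodule.finrank_le (LinearMap.range ℓ)
      rwa [Module.finrank_fin_fun] at this
    have hkerge : n - r + 1 ≤ Module.finrank F (LinearMap.ker ℓ) := by omega
    have hpred : (fun B : M => (B : Matrix (Fin m) (Fin n) F).mulVec x = 0)
        = fun B => B ∈ LinearMap.ker ℓ := by
      funext B
      simp [hl, LinearMap.mem_ker]
    simp only [hpred]
    rw [← Fintype.card_subtype]
    have : Fintype.card (LinearMap.ker ℓ) = Q ^ (Module.finrank F (LinearMap.ker ℓ)) := by
      convert (Module.card_eq_pow_finrank (K := F) (V := LinearMap.ker ℓ)) using 1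
    rw [this]
    exact pow_dvd_pow Q hkerge
  -- final arithmetic
  have h2 : Q ^ (n - r + 1) ∣ Q ^ n := pow_dvd_pow Q (by omega)
  have h3 : Q ^ (n - r + 1) ∣ Q ^ D * Q ^ (n - r) :=
    Dvd.dvd.mul_right (pow_dvd_pow Q (by omega)) _
  have h4 : S + Q ^ (n - r) = Q ^ n + Q ^ D * Q ^ (n - r) := by
    rw [hrow]
    have h5 : 1 ≤ Q ^ D := Nat.one_le_pow _ _ (by omega)
    obtain ⟨k, hk⟩ := Nat.exists_eq_add_of_le h5
    rw [hk]
    simp [Nat.add_sub_cancel_left, add_mul, one_mul]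
    ring
  have h6 : Q ^ (n - r + 1) ∣ (Q ^ n + Q ^ D * Q ^ (n - r)) - S :=
    Nat.dvd_sub (Nat.dvd_add h2 h3) hcol
  rw [← h4, Nat.add_sub_cancel_left] at h6
  have h7 : Q ^ (n - r) < Q ^ (n - r + 1) :=
    Nat.pow_lt_pow_right hQ2 (Nat.lt_succ_self _)
  have h8 : Q ^ (n - r + 1) ≤ Q ^ (n - r) :=
    Nat.le_of_dvd (Nat.pow_pos (by omega)) h6
  omega
end

section
/- Let K be a field with |K| ≥ r + 1 and M a constant rank r subspace of M_n(K) with dim M > n. Then for every nonzero u ∈ K^n, there exists a nonzero A ∈ M with Au = 0, and moreover dim {Bu : B ∈ M} ≤ r. -/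
open Matrix Module Polynomial

/-- Let K be a field with |K| ≥ r + 1 and M a constant rank r subspace
of M_n(K) with dim M > n. Then for every nonzero u ∈ K^n there exists a nonzero A ∈ M
with Au = 0, and moreover dim {Bu : B ∈ M} ≤ r. -/
theorem stmt14 (K : Type*) [Field K] (n r : ℕ)
    (hK : (r + 1 : Cardinal) ≤ Cardinal.mk K)
    (M : Submodule K (Matrix (Fin n) (Fin n) K)) (hM : M ≠ ⊥)
    (hconst : ∀ A ∈ M, A ≠ 0 → Matrix.rank A = r)
    (hdim : n < Module.finrank K M)
    (u : Fin n → K) (hu : u ≠ 0) :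
    (∃ A ∈ M, A ≠ 0 ∧ A.mulVec u = 0) ∧
      Module.finrank K ↥(Submodule.map (mulVecRight K n u) M) ≤ r := by
  classical
  -- r is positive
  obtain ⟨A₀, hA₀M, hA₀⟩ := Submodule.exists_mem_ne_zero_of_ne_bot hM
  have hr : 0 < r := by
    rcases Nat.eq_zero_or_pos r with h0 | h
    · exfalso
      have hrk := hconst A₀ hA₀M hA₀
      rw [h0] at hrk
      have hbot : LinearMap.range A₀.mulVecLin = ⊥ := by
        rw [← Submodule.finrank_eq_zero (R := K)]
        exact hrk
      have h2 : A₀.mulVecLin = 0 := LinearMap.range_eq_bot.mp hbot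
      apply hA₀
      ext i j
      have h3 : A₀.mulVec (Pi.single j 1) = 0 := by
        rw [← Matrix.mulVecLin_apply, h2]; rfl
      have := congrFun h3 i
      simpa using this
    · exact h
  -- Part 1 : kernel of B ↦ Bu on M is nontrivial
  set φ := mulVecRight K n u with hφ
  let ψ : M →ₗ[K] (Fin n → K) := φ.comp M.subtype
  have hker : LinearMap.ker ψ ≠ ⊥ := by
    intro hbot
    have h1 := LinearMap.finrank_range_add_finrank_ker ψ
    rw [hbot, finrank_bot, add_zero] at h1
    have h2 : finrank K (LinearMap.range ψ) ≤ n := by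
      have := Submodule.finrank_le (LinearMap.range ψ)
      simpa [Module.finrank_pi] using this
    omega
  obtain ⟨x, hxker, hx0⟩ := Submodule.exists_mem_ne_zero_of_ne_bot hker
  set A : Matrix (Fin n) (Fin n) K := (x : Matrix (Fin n) (Fin n) K) with hAdef
  have hAM : A ∈ M := x.2
  have hAne : A ≠ 0 := fun h => hx0 (Subtype.ext h)
  have hAu : A.mulVec u = 0 := LinearMap.mem_ker.mp hxker
  have hrkA : A.rank = r := hconst A hAM hAne
  set W := LinearMap.range A.mulVecLin with hWdef
  have hWfr : finrank K ↥W = r := hrkA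
  -- Main claim : for every B ∈ M, B *ᵥ u ∈ W
  have key : ∀ B ∈ M, B.mulVec u ∈ W := by
    intro B hBM
    by_contra hw
    set w := B.mulVec u with hwdef
    -- basis of W, lifted to K^n
    let bW : Basis (Fin r) K ↥W := finBasisOfFinrankEq K ↥W hWfr
    let a : Fin r → (Fin n → K) := fun i => (bW i : Fin n → K)
    have ha_mem : ∀ i, a i ∈ W := fun i => (bW i).2
    have hvex : ∀ i, ∃ y, A.mulVec y = a i := by
      intro i
      obtain ⟨y, hy⟩ := ha_mem i
      exact ⟨y, hy⟩
    choose v hv using hvex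
    have haind : LinearIndependent K a :=
      bW.linearIndependent.map' W.subtype (Submodule.ker_subtype W)
    have hspan : Submodule.span K (Set.range a) = W := by
      have h1 : Set.range a = W.subtype '' Set.range bW := by
        rw [← Set.range_comp]; rfl
      rw [h1, Submodule.span_image, bW.span_eq, Submodule.map_top, Submodule.range_subtype]
    let f : Fin (r + 1) → (Fin n → K) := Fin.snoc a w
    have hfind : LinearIndependent K f :=
      linearIndependent_fin_snoc.mpr ⟨haind, by rwa [hspan]⟩
    obtain ⟨S', hcompl⟩ := Submodule.exists_isCompl (Submodule.span K (Set.range f))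
    let bS : Basis (Fin (r + 1)) K ↥(Submodule.span K (Set.range f)) := Basis.span hfind
    let ρ : (Fin n → K) →ₗ[K] (Fin r → K) :=
      (LinearMap.funLeft K K Fin.castSucc).comp
        (bS.equivFun.toLinearMap.comp
          ((Submodule.span K (Set.range f)).linearProjOfIsCompl S' hcompl))
    have hρf : ∀ j : Fin (r + 1), ∀ i : Fin r,
        ρ (f j) i = if j = Fin.castSucc i then 1 else 0 := by
      intro j i
      have hmem : f j ∈ Submodule.span K (Set.range f) :=
        Submodule.subset_span (Set.mem_range_self j)
      have hproj : (Submodule.span K (Set.range f)).linearProjOfIsCompl S' hcompl (f j)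
          = bS j := by
        have h1 : (⟨f j, hmem⟩ : ↥(Submodule.span K (Set.range f))) = bS j := by
          apply Subtype.ext
          simp [bS, Basis.span_apply]
        rw [← h1]
        exact Submodule.linearProjOfIsCompl_apply_left hcompl ⟨f j, hmem⟩
      show (LinearMap.funLeft K K Fin.castSucc) (bS.equivFun
        ((Submodule.span K (Set.range f)).linearProjOfIsCompl S' hcompl (f j))) i
          = if j = Fin.castSucc i then 1 else 0
      rw [hproj]
      rw [show (LinearMap.funLeft K K Fin.castSucc) (bS.equivFun (bS j)) i
          = bS.equivFun (bS j) (Fin.castSucc i) from rfl]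
      rw [Basis.equivFun_self]
    have hρa : ∀ i' : Fin r, ρ (a i') = Pi.single i' 1 := by
      intro i'
      funext i
      have h1 : f (Fin.castSucc i') = a i' := by simp [f]
      rw [← h1, hρf (Fin.castSucc i') i]
      rw [Pi.single_apply]
      simp [Fin.castSucc_inj, eq_comm]
    have hρw : ρ w = 0 := by
      funext i
      have h1 : f (Fin.last r) = w := by simp [f]
      rw [← h1, hρf (Fin.last r) i]
      simp [(Fin.castSucc_lt_last i).ne']
    have hρA : ∀ i : Fin r, ρ (A.mulVec (v i)) = Pi.single i 1 := by
      intro i; rw [hv i]; exact hρa i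
    -- the matrix B'
    set B' : Matrix (Fin r) (Fin r) K := Matrix.of (fun i j => ρ (B.mulVec (v j)) i) with hB'
    -- determinant vanishing for all t
    have hdet : ∀ t : K, (t • (1 : Matrix (Fin r) (Fin r) K) + B').det = 0 := by
      intro t
      set Ct : Matrix (Fin n) (Fin n) K := t • A + B with hCt
      have hCtM : Ct ∈ M := M.add_mem (M.smul_mem t hAM) hBM
      have hCtmul : ∀ y, Ct.mulVec y = t • A.mulVec y + B.mulVec y := by
        intro y
        rw [hCt, Matrix.add_mulVec, Matrix.smul_mulVec]
      by_cases hCt0 : Ct = 0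
      · have hzero : t • (1 : Matrix (Fin r) (Fin r) K) + B' = 0 := by
          ext i j
          have h1 : t • A.mulVec (v j) + B.mulVec (v j) = 0 := by
            rw [← hCtmul, hCt0]; simp
          have h2 : B.mulVec (v j) = -(t • A.mulVec (v j)) :=
            eq_neg_of_add_eq_zero_right h1
          have h3 : ρ (B.mulVec (v j)) = -(t • (Pi.single j 1 : Fin r → K)) := by
            rw [h2, map_neg, LinearMap.map_smul, hρA]
          simp only [Matrix.add_apply, Matrix.smul_apply, Matrix.one_apply, hB',
            Matrix.of_apply, h3, Pi.neg_apply, Pi.smul_apply, Pi.single_apply,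
            smul_eq_mul, Matrix.zero_apply]
          by_cases hij : i = j <;> simp [hij, eq_comm]
        rw [hzero]
        have : Nonempty (Fin r) := ⟨⟨0, hr⟩⟩
        exact Matrix.det_zero
      · have hrkCt : finrank K ↥(LinearMap.range Ct.mulVecLin) = r := hconst Ct hCtM hCt0
        set g : Fin (r + 1) → (Fin n → K) := Fin.snoc (fun i => Ct.mulVec (v i)) w with hg
        have hmem : ∀ j, g j ∈ LinearMap.range Ct.mulVecLin := by
          intro j
          refine Fin.lastCases ?_ ?_ j
          · have : g (Fin.last r) = w := by simp [hg]
            rw [this]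
            refine ⟨u, ?_⟩
            rw [Matrix.mulVecLin_apply, hCtmul, hAu, smul_zero, zero_add]
          · intro i
            have : g (Fin.castSucc i) = Ct.mulVec (v i) := by simp [hg]
            rw [this]
            exact ⟨v i, rfl⟩
        have hnotind : ¬ LinearIndependent K g := by
          intro hind
          have h1 : finrank K ↥(Submodule.span K (Set.range g)) = r + 1 := by
            rw [finrank_span_eq_card hind, Fintype.card_fin]
          have h2 : Submodule.span K (Set.range g) ≤ LinearMap.range Ct.mulVecLin :=
            Submodule.span_le.mpr (Set.range_subset_iff.mpr hmem)
          have h3 := Submodule.finrank_mono h2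
          rw [h1, hrkCt] at h3
          omega
        obtain ⟨c, hcsum, i₀, hci₀⟩ := Fintype.not_linearIndependent_iff.mp hnotind
        rw [Fin.sum_univ_castSucc] at hcsum
        simp only [hg, Fin.snoc_castSucc, Fin.snoc_last] at hcsum
        set lam : Fin r → K := fun i => c i.castSucc with hlam
        have hlamne : lam ≠ 0 := by
          intro h0
          have hall : ∀ i : Fin r, c i.castSucc = 0 := fun i => congrFun h0 i
          have hgl : c (Fin.last r) • w = 0 := by
            have := hcsum
            simp only [hall, zero_smul, Finset.sum_const_zero, zero_add] at this
            exact this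
          have hgl0 : c (Fin.last r) ≠ 0 := by
            rcases Fin.eq_castSucc_or_eq_last i₀ with ⟨i, rfl⟩ | rfl
            · exact absurd (hall i) hci₀
            · exact hci₀
          have hw0 : w = 0 := by
            rcases smul_eq_zero.mp hgl with h | h
            · exact absurd h hgl0
            · exact h
          exact hw (hw0 ▸ W.zero_mem)
        have hρsum := congrArg ρ hcsum
        rw [map_add, map_sum, map_zero] at hρsum
        simp only [LinearMap.map_smul, hρw, smul_zero, add_zero] at hρsum
        have hρCt : ∀ i : Fin r,
            ρ (Ct.mulVec (v i)) = t • (Pi.single i 1 : Fin r → K) + ρ (B.mulVec (v i)) := by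
          intro i
          rw [hCtmul, map_add, LinearMap.map_smul, hρA]
        rw [← Matrix.exists_mulVec_eq_zero_iff]
        refine ⟨lam, hlamne, ?_⟩
        funext i
        have h5 := congrFun hρsum i
        simp only [hρCt, Finset.sum_apply, Pi.smul_apply, Pi.add_apply, Pi.zero_apply,
          smul_eq_mul] at h5
        rw [Matrix.mulVec]
        show (fun j => (t • (1 : Matrix (Fin r) (Fin r) K) + B') i j) ⬝ᵥ lam = 0
        rw [dotProduct]
        rw [← h5]
        apply Finset.sum_congr rfl
        intro j _
        simp only [Matrix.add_apply, Matrix.smul_apply, Matrix.one_apply, hB',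
          Matrix.of_apply, Pi.single_apply, smul_eq_mul]
        by_cases hij : i = j <;> simp [hij, eq_comm] <;> ring
    -- polynomial argument
    set P : K[X] := (-B').charpoly with hP
    have hPdeg : P.natDegree = r := by
      rw [hP, Matrix.charpoly_natDegree_eq_dim, Fintype.card_fin]
    have hPeval : ∀ t : K, P.eval t = 0 := by
      intro t
      have h1 : P.eval t = (t • (1 : Matrix (Fin r) (Fin r) K) + B').det := by
        rw [hP, Matrix.charpoly]
        rw [show Polynomial.eval t (Matrix.charmatrix (-B')).det
            = ((Polynomial.evalRingHom t).mapMatrix (Matrix.charmatrix (-B'))).det from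
          RingHom.map_det (Polynomial.evalRingHom t) _]
        congr 1
        ext i j
        simp only [RingHom.mapMatrix_apply, Matrix.map_apply, Matrix.charmatrix_apply,
          Matrix.sub_apply, Matrix.diagonal_apply, Matrix.neg_apply, map_sub,
          Polynomial.coe_evalRingHom, Polynomial.eval_C, Matrix.add_apply,
          Matrix.smul_apply, Matrix.one_apply, smul_eq_mul]
        by_cases hij : i = j <;> simp [hij] <;> ring
      rw [h1]
      exact hdet t
    have hemb : Nonempty (ULift.{_, 0} (Fin (r + 1)) ↪ K) := by
      rw [← Cardinal.le_def]
      rw [Cardinal.mk_uLift, Cardinal.mk_fin]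
      simpa using hK
    obtain ⟨e⟩ := hemb
    let emb : Fin (r + 1) ↪ K := (Equiv.ulift.symm.toEmbedding).trans e
    have hP0 : P = 0 := by
      refine P.eq_zero_of_natDegree_lt_card_of_eval_eq_zero emb.injective
        (fun i => hPeval _) ?_
      rw [hPdeg, Fintype.card_fin]
      omega
    exact (Matrix.charpoly_monic (-B')).ne_zero hP0
  -- conclude
  refine ⟨⟨A, hAM, hAne, hAu⟩, ?_⟩
  have hle : Submodule.map (mulVecRight K n u) M ≤ W := by
    rintro y ⟨B, hB, rfl⟩
    exact key B hB
  calc finrank K ↥(Submodule.map (mulVecRight K n u) M)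
      ≤ finrank K ↥W := Submodule.finrank_mono hle
    _ = r := hWfr
end
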